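/- arXiv:2403.14942 — 6 statements merged into one kernel-verified Lean document; each statement's English description precedes it below -/
import Mathlib

section
/- Let a ∈ ℂ and b ∈ ℂ ∖ ℤ_{≤0}. Then there exists a constant C > 0 such that |(a)_n / (b)_n| ≤ C · n^{Re(a−b)} for every integer n ≥ 1. -/
noncomputable def poch (a : ℂ) (n : ℕ) : ℂ := ∏ i ∈ Finset.range n, (a + i)

open Filter Topology

lemma poch_ne_zero {a : ℂ} (ha : ∀ m : ℕ, a ≠ -(m : ℂ)) (n : ℕ) : poch a n ≠ 0 := by
  rw [poch, Finset.prod_ne_zero_iff]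
  intro i _ h
  exact ha i (by linear_combination h)

lemma gammaSeq_eq (s : ℂ) (k : ℕ) :
    Complex.GammaSeq s k = (k : ℂ) ^ s * (Nat.factorial k : ℂ) / poch s (k + 1) := rfl

lemma key_bound (a b : ℂ) (hb : ∀ m : ℕ, b ≠ -(m : ℂ)) :
    ∃ C > (0 : ℝ), ∀ k : ℕ,
      ‖poch a (k+1) / poch b (k+1)‖ * ((k:ℝ)+1) ^ ((b-a).re) ≤ C := by
  set v : ℕ → ℝ := fun k =>
    ‖poch a (k+1) / poch b (k+1)‖ * ((k:ℝ)+1) ^ ((b-a).re) with hv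
  have hv0 : ∀ k, 0 ≤ v k := fun k =>
    mul_nonneg (norm_nonneg _) (Real.rpow_nonneg (by positivity) _)
  by_cases hA : ∃ m : ℕ, a = -(m : ℂ)
  · obtain ⟨m, rfl⟩ := hA
    refine ⟨(∑ j ∈ Finset.range m, v j) + 1, by positivity, fun k => ?_⟩
    show v k ≤ (∑ j ∈ Finset.range m, v j) + 1
    rcases lt_or_ge k m with hk | hk
    · have : v k ≤ ∑ j ∈ Finset.range m, v j :=
        Finset.single_le_sum (fun j _ => hv0 j) (Finset.mem_range.2 hk)
      linarith
    · have hz : poch (-(m:ℂ)) (k+1) = 0 := by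
        rw [poch]
        exact Finset.prod_eq_zero (i := m) (Finset.mem_range.2 (Nat.lt_succ_of_le hk))
          (by ring)
      have h0 : v k = 0 := by
        rw [hv]
        simp only [hz, zero_div, norm_zero, zero_mul]
      rw [h0]
      have hs := Finset.sum_nonneg (fun j (_ : j ∈ Finset.range m) => hv0 j)
      linarith
  · push_neg at hA
    have hGa : Complex.Gamma a ≠ 0 := Complex.Gamma_ne_zero hA
    have hpa : ∀ n, poch a n ≠ 0 := poch_ne_zero hA
    have hpb : ∀ n, poch b n ≠ 0 := poch_ne_zero hb
    set r : ℕ → ℂ := fun k => poch a (k+1) / poch b (k+1) * ((k:ℂ)+1) ^ (b-a) with hr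
    have hvr : ∀ k, v k = ‖r k‖ := by
      intro k
      rw [hr, hv]
      simp only [norm_mul]
      congr 1
      have h1 : ((k:ℂ)+1) = (((k:ℝ)+1 : ℝ) : ℂ) := by push_cast; ring
      rw [h1, Complex.norm_cpow_eq_rpow_re_of_pos (by positivity)]
    have hq : Tendsto (fun k : ℕ => ((k:ℂ))^(a-b) * ((k:ℂ)+1)^(b-a)) atTop (𝓝 1) := by
      have h1 : ∀ᶠ k : ℕ in atTop, ((k:ℂ))^(a-b) * ((k:ℂ)+1)^(b-a)
          = ((((k:ℝ)+1)/(k:ℝ) : ℝ) : ℂ) ^ (b-a) := by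
        filter_upwards [eventually_ge_atTop 1] with k hk
        have hk0 : (0:ℝ) < (k:ℝ) := by exact_mod_cast hk
        have hkne : ((k:ℕ):ℂ) ≠ 0 := Nat.cast_ne_zero.2 (Nat.one_le_iff_ne_zero.1 hk)
        have e1 : ((k:ℂ)+1) = (((k:ℝ)):ℂ) * ((((k:ℝ)+1)/(k:ℝ) : ℝ) : ℂ) := by
          push_cast
          field_simp
        have e2 := Complex.mul_cpow_ofReal_nonneg hk0.le
          (by positivity : (0:ℝ) ≤ ((k:ℝ)+1)/(k:ℝ)) (b-a)
        have e3 : (((k:ℝ)):ℂ) = (k:ℂ) := Complex.ofReal_natCast k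
        rw [e1, e2, e3, ← mul_assoc, ← Complex.cpow_add _ _ hkne]
        norm_num
      have h2 : Tendsto (fun k : ℕ => ((((k:ℝ)+1)/(k:ℝ) : ℝ) : ℂ)) atTop (𝓝 1) := by
        have hre : Tendsto (fun k : ℕ => (((k:ℝ)+1)/(k:ℝ) : ℝ)) atTop (𝓝 1) := by
          have hbase : Tendsto (fun k : ℕ => 1 + 1/(k:ℝ)) atTop (𝓝 1) := by
            simpa using (tendsto_const_nhds (x := (1:ℝ))).add (tendsto_one_div_atTop_nhds_zero_nat)
          refine hbase.congr' ?_
          filter_upwards [eventually_ge_atTop 1] with k hk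
          have hk0 : (0:ℝ) < (k:ℝ) := by exact_mod_cast hk
          field_simp
        have h4 := (Complex.continuous_ofReal.tendsto (1:ℝ)).comp hre
        simpa only [Function.comp_def, Complex.ofReal_one] using h4
      have hc : ContinuousAt (fun z : ℂ => z ^ (b-a)) 1 :=
        continuousAt_cpow_const (by left; norm_num)
      have h3 := hc.tendsto.comp h2
      rw [Complex.one_cpow] at h3
      exact h3.congr' (by filter_upwards [h1] with k hk using hk.symm)
    have hGS : Tendsto (fun k => Complex.GammaSeq b k / Complex.GammaSeq a k) atTop
        (𝓝 (Complex.Gamma b / Complex.Gamma a)) :=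
      (Complex.GammaSeq_tendsto_Gamma b).div (Complex.GammaSeq_tendsto_Gamma a) hGa
    have hrt : Tendsto r atTop (𝓝 (Complex.Gamma b / Complex.Gamma a)) := by
      have heq : ∀ᶠ k : ℕ in atTop, (Complex.GammaSeq b k / Complex.GammaSeq a k)
          * (((k:ℂ))^(a-b) * ((k:ℂ)+1)^(b-a)) = r k := by
        filter_upwards [eventually_ge_atTop 1] with k hk
        have hkne : ((k:ℕ):ℂ) ≠ 0 := Nat.cast_ne_zero.2 (Nat.one_le_iff_ne_zero.1 hk)
        have hA0 : (k:ℂ)^a ≠ 0 := fun h =>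
          hkne (Complex.cpow_eq_zero_iff _ _ |>.1 h).1
        have hB0 : (k:ℂ)^(b-a) ≠ 0 := fun h =>
          hkne (Complex.cpow_eq_zero_iff _ _ |>.1 h).1
        have hF0 : ((Nat.factorial k : ℕ):ℂ) ≠ 0 := Nat.cast_ne_zero.2 k.factorial_ne_zero
        have e1 : (k:ℂ)^b = (k:ℂ)^a * (k:ℂ)^(b-a) := by
          rw [← Complex.cpow_add _ _ hkne]; ring_nf
        have e2 : (k:ℂ)^(a-b) = ((k:ℂ)^(b-a))⁻¹ := by
          rw [show a-b = -(b-a) by ring, Complex.cpow_neg]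
        rw [gammaSeq_eq, gammaSeq_eq, hr, e1, e2]
        field_simp [hpa (k+1), hpb (k+1), hA0, hB0, hF0]
      have := (hGS.mul hq).congr' heq
      simpa using this
    have hvt : Tendsto v atTop (𝓝 ‖Complex.Gamma b / Complex.Gamma a‖) := by
      have := (continuous_norm.tendsto _).comp hrt
      exact Tendsto.congr (fun k => (hvr k).symm) this
    obtain ⟨B, hB⟩ := hvt.bddAbove_range
    refine ⟨max B 1, lt_max_of_lt_right one_pos, fun k => ?_⟩
    exact le_max_of_le_left (hB (Set.mem_range_self k))

/-- Lemma 1: sharp bound for the ratio of Pochhammer symbols. -/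
theorem pochhammer_ratio_bound (a b : ℂ) (hb : ∀ m : ℕ, b ≠ -(m : ℂ)) :
    ∃ C > (0 : ℝ), ∀ n : ℕ, 1 ≤ n →
      ‖poch a n / poch b n‖ ≤ C * (n : ℝ) ^ (a - b).re := by
  obtain ⟨C, hC, h⟩ := key_bound a b hb
  refine ⟨C, hC, fun n hn => ?_⟩
  obtain ⟨k, rfl⟩ := Nat.exists_eq_add_of_le' hn
  have hk := h k
  have hpos : (0:ℝ) < ((k:ℝ)+1) ^ ((a-b).re) := Real.rpow_pos_of_pos (by positivity) _
  have hre : (b-a).re = -((a-b).re) := by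
    rw [show b - a = -(a-b) by ring, Complex.neg_re]
  rw [hre, Real.rpow_neg (by positivity)] at hk
  have hcast : ((k+1 : ℕ) : ℝ) = (k:ℝ)+1 := by push_cast; ring
  rw [hcast]
  set X := ‖poch a (k+1) / poch b (k+1)‖
  set Y := ((k:ℝ)+1) ^ ((a-b).re)
  calc X = X * (Y⁻¹ * Y) := by rw [inv_mul_cancel₀ hpos.ne', mul_one]
    _ = (X * Y⁻¹) * Y := by ring
    _ ≤ C * Y := mul_le_mul_of_nonneg_right hk hpos.le
end

section
/- For every a ∈ ℝ there exists a constant K > 0, independent of x, such that Φ_a(x) ≤ K · x^a e^x for all real x ≥ 1. -/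
open Real

lemma myfact_add_le (m n : ℕ) : Nat.factorial (m + n) ≤ Nat.factorial m * (m + n) ^ n := by
  induction n with
  | zero => simp
  | succ n ih =>
    have h : Nat.factorial (m + (n+1)) = Nat.factorial (m+n) * (m + n + 1) := by
      rw [← Nat.add_assoc, Nat.factorial_succ]; ring
    rw [h]
    calc Nat.factorial (m+n) * (m+n+1) ≤ (Nat.factorial m * (m+n)^n) * (m+n+1) :=
          Nat.mul_le_mul_right _ ih
      _ ≤ Nat.factorial m * (m+(n+1))^(n+1) := by
          rw [Nat.mul_assoc]
          refine Nat.mul_le_mul_left _ ?_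
          have h1 : (m+n)^n ≤ (m+n+1)^n := Nat.pow_le_pow_left (Nat.le_succ _) n
          calc (m+n)^n * (m+n+1) ≤ (m+n+1)^n * (m+n+1) := Nat.mul_le_mul_right _ h1
            _ = (m+(n+1))^(n+1) := by rw [← pow_succ]; ring_nf

lemma mypow_div_fact_le_exp (y : ℝ) (hy : 0 ≤ y) (n : ℕ) : y ^ n / n.factorial ≤ Real.exp y := by
  refine le_trans ?_ (Real.sum_le_exp_of_nonneg hy (n+1))
  refine Finset.single_le_sum (f := fun i => y ^ i / (i.factorial : ℝ)) ?_ (Finset.self_mem_range_succ n)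
  intro i _
  positivity

lemma myexp_half_le {ε : ℝ} (h0 : 0 ≤ ε) (h1 : ε ≤ 1) : Real.exp (ε/2) ≤ 1 + ε := by
  have h2 : 1 - ε/2 ≤ Real.exp (-(ε/2)) := by
    have := Real.add_one_le_exp (-(ε/2)); linarith
  have h3 : 0 < 1 - ε/2 := by linarith
  have h4 : Real.exp (ε/2) = 1 / Real.exp (-(ε/2)) := by
    rw [Real.exp_neg]; field_simp
  rw [h4]
  refine (one_div_le_one_div_of_le h3 h2).trans ?_
  rw [div_le_iff₀ h3]
  nlinarith

-- Claim A
lemma mypow_le (x : ℝ) (hx : 1 ≤ x) (n k : ℕ) :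
    ((k:ℝ)+1)^n ≤ n.factorial * (2*x)^n * (1+1/x)^(k+1) := by
  have hx0 : (0:ℝ) < x := lt_of_lt_of_le one_pos hx
  set ε : ℝ := 1/x with hε
  have hε0 : 0 ≤ ε := by positivity
  have hε1 : ε ≤ 1 := by rw [hε, div_le_one hx0]; exact hx
  have hy : (0:ℝ) ≤ ((k:ℝ)+1) * (ε/2) := by positivity
  have h1 : (((k:ℝ)+1) * (ε/2))^n / n.factorial ≤ Real.exp (((k:ℝ)+1) * (ε/2)) :=
    mypow_div_fact_le_exp _ hy n
  have h2 : Real.exp (((k:ℝ)+1) * (ε/2)) = (Real.exp (ε/2))^(k+1) := by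
    rw [← Real.exp_nat_mul]; push_cast; ring_nf
  have h3 : (Real.exp (ε/2))^(k+1) ≤ (1+ε)^(k+1) :=
    pow_le_pow_left₀ (Real.exp_nonneg _) (myexp_half_le hε0 hε1) _
  have h4 : (((k:ℝ)+1) * (ε/2))^n ≤ n.factorial * (1+ε)^(k+1) := by
    have hf : (0:ℝ) < n.factorial := by positivity
    rw [div_le_iff₀ hf] at h1
    calc (((k:ℝ)+1) * (ε/2))^n ≤ Real.exp (((k:ℝ)+1)*(ε/2)) * n.factorial := h1
      _ = n.factorial * (Real.exp (ε/2))^(k+1) := by rw [h2]; ring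
      _ ≤ n.factorial * (1+ε)^(k+1) := by
          exact mul_le_mul_of_nonneg_left h3 (le_of_lt hf)
  -- (k+1)*(ε/2) = (k+1)/(2x)
  have hkey : ((k:ℝ)+1)^n = (((k:ℝ)+1) * (ε/2))^n * (2*x)^n := by
    rw [← mul_pow]
    have he : ((k:ℝ)+1) * (ε/2) * (2*x) = (k:ℝ)+1 := by
      rw [hε]; field_simp
    rw [he]
  rw [hkey]
  have h2x : (0:ℝ) ≤ (2*x)^n := by positivity
  calc (((k:ℝ)+1) * (ε/2))^n * (2*x)^n ≤ (n.factorial * (1+ε)^(k+1)) * (2*x)^n :=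
        mul_le_mul_of_nonneg_right h4 h2x
    _ = n.factorial * (2*x)^n * (1+ε)^(k+1) := by ring

lemma mytsum_shift_le (c : ℕ) (y : ℝ) (hy : 0 ≤ y) :
    ∑' k : ℕ, y ^ (k + c) / (Nat.factorial (k + c) : ℝ) ≤ Real.exp y := by
  have hsum : Summable (fun m : ℕ => y ^ m / (Nat.factorial m : ℝ)) :=
    Real.summable_pow_div_factorial y
  have hexp : Real.exp y = ∑' m : ℕ, y ^ m / (Nat.factorial m : ℝ) := by
    rw [Real.exp_eq_exp_ℝ, NormedSpace.exp_eq_tsum_div]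
  rw [hexp]
  refine (hsum.comp_injective (add_left_injective c)).tsum_le_tsum_of_inj (fun k => k + c) (add_left_injective c)
    (fun m _ => by positivity) (fun k => le_rfl)
    hsum

lemma mykey (a x : ℝ) (hx : 1 ≤ x) (n : ℕ) (hn : |a| ≤ n) (k : ℕ) :
    ((k:ℝ)+1)^a / (Nat.factorial (k+1)) * x^(k+1) ≤
    x ^ a * ((n.factorial * 2^n) * ((x+1)^(k+1) / (Nat.factorial (k+1)))
      + ((n:ℝ)+1)^n * (x^(k+1+n) / (Nat.factorial (k+1+n)))) := by
  have hx0 : (0:ℝ) < x := lt_of_lt_of_le one_pos hx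
  have hk0 : (0:ℝ) < (k:ℝ)+1 := by positivity
  set t : ℝ := ((k:ℝ)+1)/x with htdef
  have ht0 : 0 < t := by positivity
  have hsplit : ((k:ℝ)+1)^a = x^a * t^a := by
    have h : (k:ℝ)+1 = x * t := by rw [htdef]; field_simp
    rw [h, Real.mul_rpow hx0.le ht0.le]
  have hta : t^a ≤ t^(n:ℝ) + t^(-(n:ℝ)) := by
    rcases le_or_gt 1 t with h1 | h1
    · have : t^a ≤ t^(n:ℝ) := by
        apply Real.rpow_le_rpow_of_exponent_le h1
        exact le_trans (le_abs_self a) hn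
      have h2 : 0 ≤ t^(-(n:ℝ)) := Real.rpow_nonneg ht0.le _
      linarith
    · have : t^a ≤ t^(-(n:ℝ)) := by
        apply Real.rpow_le_rpow_of_exponent_ge ht0 h1.le
        have := neg_abs_le a
        have hn' : -(n:ℝ) ≤ -|a| := by linarith
        linarith
      have h2 : 0 ≤ t^(n:ℝ) := Real.rpow_nonneg ht0.le _
      linarith
  have htn : t^(n:ℝ) = ((k:ℝ)+1)^n / x^n := by
    rw [Real.rpow_natCast, htdef, div_pow]
  have htn' : t^(-(n:ℝ)) = x^n / ((k:ℝ)+1)^n := by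
    rw [Real.rpow_neg ht0.le, Real.rpow_natCast, htdef, div_pow, inv_div]
  have hP : (0:ℝ) < (Nat.factorial (k+1) : ℝ) := by
    exact_mod_cast Nat.factorial_pos (k+1)
  have hterm : ((k:ℝ)+1)^a / (Nat.factorial (k+1)) * x^(k+1)
      = x^a * (t^a * (x^(k+1) / (Nat.factorial (k+1) : ℝ))) := by rw [hsplit]; ring
  rw [hterm]
  refine mul_le_mul_of_nonneg_left ?_ (Real.rpow_nonneg hx0.le a)
  have hQ : (0:ℝ) ≤ x^(k+1) / (Nat.factorial (k+1) : ℝ) := by positivity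
  have hA : t^(n:ℝ) * (x^(k+1) / (Nat.factorial (k+1):ℝ))
      ≤ (n.factorial * 2^n) * ((x+1)^(k+1) / (Nat.factorial (k+1):ℝ)) := by
    rw [htn]
    have h1 := mypow_le x hx n k
    have hxx : ((1+1/x)*x) = x+1 := by field_simp
    calc ((k:ℝ)+1)^n / x^n * (x^(k+1) / (Nat.factorial (k+1):ℝ))
        ≤ (n.factorial * (2*x)^n * (1+1/x)^(k+1)) / x^n * (x^(k+1) / (Nat.factorial (k+1):ℝ)) := by
          gcongr
      _ = (n.factorial * 2^n) * ((x+1)^(k+1) / (Nat.factorial (k+1):ℝ)) := by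
          rw [mul_pow 2 x, ← hxx, mul_pow (1+1/x) x]
          field_simp
  have hB : t^(-(n:ℝ)) * (x^(k+1) / (Nat.factorial (k+1):ℝ))
      ≤ ((n:ℝ)+1)^n * (x^(k+1+n) / (Nat.factorial (k+1+n):ℝ)) := by
    rw [htn']
    have hP2 : (0:ℝ) < (Nat.factorial (k+1+n) : ℝ) := by
      exact_mod_cast Nat.factorial_pos (k+1+n)
    have hfa : ((Nat.factorial (k+1+n)):ℝ) ≤ ((n:ℝ)+1)^n * (((k:ℝ)+1)^n * (Nat.factorial (k+1):ℝ)) := by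
      have h1 := myfact_add_le (k+1) n
      have hle : k+1+n ≤ (k+1)*(n+1) := by nlinarith
      have h2 : (k+1+n)^n ≤ ((k+1)*(n+1))^n := Nat.pow_le_pow_left hle n
      have h3 : Nat.factorial (k+1+n) ≤ Nat.factorial (k+1) * ((k+1)*(n+1))^n :=
        le_trans h1 (Nat.mul_le_mul_left _ h2)
      calc ((Nat.factorial (k+1+n)):ℝ) ≤ ((Nat.factorial (k+1) * ((k+1)*(n+1))^n : ℕ):ℝ) := by
            exact_mod_cast h3
        _ = ((n:ℝ)+1)^n * (((k:ℝ)+1)^n * (Nat.factorial (k+1):ℝ)) := by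
            push_cast [mul_pow]; ring
    have heq : x^n / ((k:ℝ)+1)^n * (x^(k+1) / (Nat.factorial (k+1):ℝ))
        = x^(k+1+n) / (((k:ℝ)+1)^n * (Nat.factorial (k+1):ℝ)) := by
      rw [pow_add x (k+1) n]; field_simp
    rw [heq]
    rw [div_le_iff₀ (by positivity)]
    have hxK : (0:ℝ) ≤ x^(k+1+n) := by positivity
    calc x^(k+1+n) = x^(k+1+n) * 1 := (mul_one _).symm
      _ ≤ x^(k+1+n) * ((((n:ℝ)+1)^n * (((k:ℝ)+1)^n * (Nat.factorial (k+1):ℝ))) / (Nat.factorial (k+1+n):ℝ)) := by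
          refine mul_le_mul_of_nonneg_left ?_ hxK
          rw [le_div_iff₀ hP2]; linarith
      _ = ((n:ℝ)+1)^n * (x^(k+1+n) / (Nat.factorial (k+1+n):ℝ)) * (((k:ℝ)+1)^n * (Nat.factorial (k+1):ℝ)) := by
          field_simp
  calc t^a * (x^(k+1) / (Nat.factorial (k+1):ℝ))
      ≤ (t^(n:ℝ) + t^(-(n:ℝ))) * (x^(k+1) / (Nat.factorial (k+1):ℝ)) :=
        mul_le_mul_of_nonneg_right hta hQ
    _ = t^(n:ℝ) * (x^(k+1) / (Nat.factorial (k+1):ℝ))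
        + t^(-(n:ℝ)) * (x^(k+1) / (Nat.factorial (k+1):ℝ)) := by ring
    _ ≤ _ := add_le_add hA hB

/-- The "horizontal" generating function of Stirling numbers of real order:
`Φ_a(x) = Σ_{k=1}^∞ (k^a / k!) x^k`. -/
noncomputable def Phi (a x : ℝ) : ℝ :=
  ∑' k : ℕ, ((k + 1 : ℝ)) ^ a / (Nat.factorial (k + 1)) * x ^ (k + 1)

/-- Lemma 2 (bound): there is `K > 0` with `Φ_a(x) ≤ K x^a e^x` for all `x ≥ 1`. -/
theorem Phi_bound (a : ℝ) :
    ∃ K > (0 : ℝ), ∀ x : ℝ, 1 ≤ x → Phi a x ≤ K * x ^ a * Real.exp x := by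
  set n : ℕ := ⌈|a|⌉₊ with hndef
  have hn : |a| ≤ (n:ℝ) := Nat.le_ceil _
  set c1 : ℝ := n.factorial * 2^n with hc1
  set c2 : ℝ := ((n:ℝ)+1)^n with hc2
  have hc1pos : 0 < c1 := by rw [hc1]; positivity
  have hc2pos : 0 < c2 := by rw [hc2]; positivity
  refine ⟨c1 * Real.exp 1 + c2, by positivity, ?_⟩
  intro x hx
  have hx0 : (0:ℝ) < x := lt_of_lt_of_le one_pos hx
  have hs1 : Summable (fun k : ℕ => (x+1)^(k+1) / (Nat.factorial (k+1) : ℝ)) := by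
    have := (Real.summable_pow_div_factorial (x+1)).comp_injective (add_left_injective 1)
    exact this.congr (fun k => rfl)
  have hs2 : Summable (fun k : ℕ => x^(k+1+n) / (Nat.factorial (k+1+n) : ℝ)) := by
    have := (Real.summable_pow_div_factorial x).comp_injective (add_left_injective (1+n))
    refine this.congr (fun k => ?_)
    simp only [Function.comp]
    rw [show k+(1+n) = k+1+n from by omega]
  have hFs : Summable (fun k : ℕ => x ^ a * (c1 * ((x+1)^(k+1) / (Nat.factorial (k+1):ℝ))
      + c2 * (x^(k+1+n) / (Nat.factorial (k+1+n):ℝ)))) :=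
    ((hs1.mul_left c1).add (hs2.mul_left c2)).mul_left _
  have hkey : ∀ k : ℕ, ((k:ℝ)+1)^a / (Nat.factorial (k+1)) * x^(k+1)
      ≤ x ^ a * (c1 * ((x+1)^(k+1) / (Nat.factorial (k+1):ℝ))
        + c2 * (x^(k+1+n) / (Nat.factorial (k+1+n):ℝ))) := fun k => mykey a x hx n hn k
  have hgs : Summable (fun k : ℕ => ((k:ℝ)+1)^a / (Nat.factorial (k+1)) * x^(k+1)) := by
    refine Summable.of_nonneg_of_le (fun k => ?_) hkey hFs
    have : (0:ℝ) ≤ ((k:ℝ)+1)^a := Real.rpow_nonneg (by positivity) a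
    positivity
  have hts1 : ∑' k : ℕ, (x+1)^(k+1) / (Nat.factorial (k+1) : ℝ) ≤ Real.exp (x+1) :=
    mytsum_shift_le 1 (x+1) (by linarith)
  have hts2 : ∑' k : ℕ, x^(k+1+n) / (Nat.factorial (k+1+n) : ℝ) ≤ Real.exp x := by
    have h := mytsum_shift_le (1+n) x (by linarith)
    calc ∑' k : ℕ, x^(k+1+n) / (Nat.factorial (k+1+n) : ℝ)
        = ∑' k : ℕ, x^(k+(1+n)) / (Nat.factorial (k+(1+n)) : ℝ) :=
          tsum_congr (fun k => by rw [show k+1+n = k+(1+n) from by omega])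
      _ ≤ Real.exp x := h
  have hxa : (0:ℝ) ≤ x ^ a := Real.rpow_nonneg hx0.le a
  calc Phi a x ≤ ∑' k : ℕ, x ^ a * (c1 * ((x+1)^(k+1) / (Nat.factorial (k+1):ℝ))
        + c2 * (x^(k+1+n) / (Nat.factorial (k+1+n):ℝ))) := hgs.tsum_le_tsum hkey hFs
    _ = x ^ a * (c1 * (∑' k : ℕ, (x+1)^(k+1) / (Nat.factorial (k+1):ℝ))
        + c2 * (∑' k : ℕ, x^(k+1+n) / (Nat.factorial (k+1+n):ℝ))) := by
          rw [tsum_mul_left, (hs1.mul_left c1).tsum_add (hs2.mul_left c2),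
            tsum_mul_left, tsum_mul_left]
    _ ≤ x ^ a * (c1 * Real.exp (x+1) + c2 * Real.exp x) := by
          refine mul_le_mul_of_nonneg_left ?_ hxa
          exact add_le_add (mul_le_mul_of_nonneg_left hts1 hc1pos.le)
            (mul_le_mul_of_nonneg_left hts2 hc2pos.le)
    _ = (c1 * Real.exp 1 + c2) * x ^ a * Real.exp x := by
          rw [Real.exp_add]; ring
end

section
/- Let a, c ∈ ℂ and choose N ∈ ℤ_{>0} such that Re(c + N + 1) > 0. Define G_ℓ(z) := ₁F₁[a+ℓ; c+ℓ; z] for ℓ ∈ ℤ_{≥0} (note Re(c+ℓ) > 0 for ℓ ≥ N+1, so G_ℓ is well defined there). Then there exist constants C > 0 and γ > 0, independent of ℓ, N and z, such that |G_ℓ(z)| ≤ C e^{γ|z|} for all integers ℓ ≥ N+1 and all z ∈ ℂ. -/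
/-- The confluent hypergeometric function `₁F₁[a; b; z]`. -/
noncomputable def F11 (a b z : ℂ) : ℂ :=
  ∑' n : ℕ, poch a n / poch b n * z ^ n / Nat.factorial n

/-- Lemma 3: a global estimate for `G_ℓ(z) = ₁F₁[a+ℓ; c+ℓ; z]`, with constants `C, γ`
independent of `ℓ`, `N` and `z`. -/
theorem G_ell_bound (a c : ℂ) :
    ∃ C > (0 : ℝ), ∃ γ > (0 : ℝ), ∀ N : ℕ, 0 < N → 0 < (c + N + 1).re →
      ∀ ℓ : ℕ, N + 1 ≤ ℓ → ∀ z : ℂ,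
        ‖F11 (a + ℓ) (c + ℓ) z‖ ≤ C * Real.exp (γ * ‖z‖) := by
  set m : ℤ := max 2 (⌊-c.re⌋ + 1) with hm
  set δ : ℝ := c.re + m with hδ
  have hδpos : 0 < δ := by
    have h1 : (-c.re) < ((⌊-c.re⌋ + 1 : ℤ) : ℝ) := by push_cast; exact Int.lt_floor_add_one _
    have h2 : ((⌊-c.re⌋ + 1 : ℤ) : ℝ) ≤ (m : ℝ) := by exact_mod_cast le_max_right _ _
    simp only [hδ]; linarith
  set K : ℝ := ‖a - c‖ with hK
  set M : ℝ := 1 + K / δ with hM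
  have hM1 : 1 ≤ M := by
    have : 0 ≤ K / δ := div_nonneg (norm_nonneg _) hδpos.le
    simp [hM]; linarith
  refine ⟨1, one_pos, M, lt_of_lt_of_le one_pos hM1, ?_⟩
  intro N hN hre ℓ hℓ z
  -- δ is a lower bound for the real parts
  have hδle : ∀ i : ℕ, δ ≤ (c + ℓ + i).re := by
    intro i
    have hcre : c.re + N + 1 > 0 := by
      have := hre; simp [Complex.add_re] at this; linarith
    have hmle : (m : ℝ) ≤ (N : ℝ) + 1 := by
      have hfl : (⌊-c.re⌋ : ℤ) ≤ N := by
        have : (⌊-c.re⌋ : ℝ) ≤ -c.re := Int.floor_le _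
        have h2 : (⌊-c.re⌋ : ℝ) < (N : ℝ) + 1 := by linarith
        exact_mod_cast Int.lt_add_one_iff.mp (by exact_mod_cast h2)
      have : m ≤ (N : ℤ) + 1 := by
        apply max_le
        · omega
        · omega
      exact_mod_cast this
    have hℓ' : (N : ℝ) + 1 ≤ (ℓ : ℝ) := by exact_mod_cast hℓ
    have : (c + ℓ + i).re = c.re + ℓ + i := by simp [Complex.add_re]
    rw [this]
    have : (0 : ℝ) ≤ i := Nat.cast_nonneg i
    linarith
  have habs : ∀ i : ℕ, δ ≤ ‖c + ℓ + i‖ := fun i =>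
    (hδle i).trans (Complex.re_le_norm _)
  have hne : ∀ i : ℕ, (c + ℓ + i) ≠ 0 := by
    intro i h
    have := hδle i; rw [h] at this; simp at this; linarith
  -- factorwise bound
  have hfac : ∀ i : ℕ, ‖a + ℓ + i‖ ≤ M * ‖c + ℓ + i‖ := by
    intro i
    have h1 : ‖a + ℓ + i‖ ≤ ‖c + ℓ + i‖ + K := by
      have : a + ℓ + i = (c + ℓ + i) + (a - c) := by ring
      rw [this]; exact (norm_add_le _ _)
    have h2 : K ≤ K / δ * ‖c + ℓ + i‖ := by
      have : K / δ * δ ≤ K / δ * ‖c + ℓ + i‖ :=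
        mul_le_mul_of_nonneg_left (habs i) (div_nonneg (norm_nonneg _) hδpos.le)
      rwa [div_mul_cancel₀ K hδpos.ne'] at this
    rw [hM]; nlinarith [norm_nonneg (c + ℓ + i)]
  -- poch bounds
  have hpc_pos : ∀ n : ℕ, 0 < ‖poch (c + ℓ) n‖ := by
    intro n
    rw [poch, norm_prod]
    apply Finset.prod_pos
    intro i _
    exact norm_pos_iff.mpr (by simpa [add_assoc] using hne i)
  have hpoch : ∀ n : ℕ, ‖poch (a + ℓ) n‖ ≤ M ^ n * ‖poch (c + ℓ) n‖ := by
    intro n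
    rw [poch, poch, norm_prod, norm_prod]
    calc ∏ i ∈ Finset.range n, ‖a + ℓ + i‖
        ≤ ∏ i ∈ Finset.range n, (M * ‖c + ℓ + i‖) := by
          apply Finset.prod_le_prod
          · intro i _; exact norm_nonneg _
          · intro i _; simpa [add_assoc] using hfac i
      _ = M ^ n * ∏ i ∈ Finset.range n, ‖c + ℓ + i‖ := by
          rw [Finset.prod_mul_distrib, Finset.prod_const, Finset.card_range]
  -- termwise bound
  have hterm : ∀ n : ℕ,
      ‖poch (a + ℓ) n / poch (c + ℓ) n * z ^ n / (Nat.factorial n : ℂ)‖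
        ≤ (M * ‖z‖) ^ n / Nat.factorial n := by
    intro n
    rw [norm_div, norm_mul, norm_div, norm_pow, mul_pow]
    have habsfact : ‖(Nat.factorial n : ℂ)‖ = (Nat.factorial n : ℝ) := by simp
    rw [habsfact]
    have h1 : ‖poch (a + ℓ) n‖ / ‖poch (c + ℓ) n‖ ≤ M ^ n := by
      rw [div_le_iff₀ (hpc_pos n)]
      exact hpoch n
    gcongr
  -- sum up
  have hsum : HasSum (fun n : ℕ => (M * ‖z‖) ^ n / Nat.factorial n)
      (Real.exp (M * ‖z‖)) := by
    rw [Real.exp_eq_exp_ℝ]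
    exact NormedSpace.expSeries_div_hasSum_exp (M * ‖z‖)
  have hb := tsum_of_norm_bounded hsum hterm
  rw [F11, one_mul]
  exact hb
end

section
/- Let p ∈ ℤ_{>0}, let a₁, …, a_p, b₁, …, b_p ∈ ℂ, and let N ∈ ℤ_{>0} be such that Re(b_j + N + 1) > 0 for 1 ≤ j ≤ p. Then there exist constants C > 0 and γ > 0, independent of ℓ, N and z, such that for all integers ℓ ≥ N+1 and all z ∈ ℂ, |ₚFₚ[a₁+ℓ, …, a_p+ℓ; b₁+ℓ, …, b_p+ℓ; z]| ≤ C e^{γ|z|}. -/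
/-- The generalized hypergeometric function `ₚFₚ[a₁,…,a_p; b₁,…,b_p; z]`. -/
noncomputable def pFp {p : ℕ} (a b : Fin p → ℂ) (z : ℂ) : ℂ :=
  ∑' n : ℕ, (∏ i, poch (a i) n) / (∏ j, poch (b j) n) * z ^ n / Nat.factorial n

noncomputable def dlt (x : ℝ) : ℝ := if Int.fract x = 0 then 1 else Int.fract x

lemma dlt_pos (x : ℝ) : 0 < dlt x := by
  unfold dlt; split
  · exact one_pos
  · exact lt_of_le_of_ne (Int.fract_nonneg x) (Ne.symm ‹_›)

lemma dlt_le (x : ℝ) (ℓ : ℕ) (h : 0 < x + ℓ) : dlt x ≤ x + ℓ := by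
  unfold dlt
  have hfr : Int.fract x = x - ⌊x⌋ := rfl
  split
  next hf =>
    have hx : x = (⌊x⌋ : ℝ) := by rw [hfr] at hf; linarith
    have h2 : (0:ℝ) < ((⌊x⌋ + (ℓ:ℤ) : ℤ) : ℝ) := by push_cast; rw [hx] at h; push_cast at h; linarith
    have h3 : (0:ℤ) < ⌊x⌋ + (ℓ:ℤ) := by exact_mod_cast h2
    have h4 : (1:ℤ) ≤ ⌊x⌋ + (ℓ:ℤ) := h3
    have h5 : (1:ℝ) ≤ ((⌊x⌋ + (ℓ:ℤ) : ℤ) : ℝ) := by exact_mod_cast h4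
    push_cast at h5; linarith [hx ▸ h5]
  next hf =>
    have h0 : 0 < Int.fract x := lt_of_le_of_ne (Int.fract_nonneg x) (Ne.symm hf)
    have h1 : Int.fract x < 1 := Int.fract_lt_one x
    by_contra hc
    push_neg at hc
    have h6 : ((⌊x⌋ + (ℓ:ℤ) : ℤ) : ℝ) < 0 := by push_cast; rw [hfr] at hc; linarith
    have h7 : ⌊x⌋ + (ℓ:ℤ) < 0 := by exact_mod_cast h6
    have h8 : ⌊x⌋ + (ℓ:ℤ) ≤ -1 := by omega
    have h9 : ((⌊x⌋ + (ℓ:ℤ) : ℤ) : ℝ) ≤ -1 := by exact_mod_cast h8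
    push_cast at h9
    rw [hfr] at h1; linarith

set_option maxHeartbeats 1000000 in
/-- Generalization of Lemma 3: a global estimate for
`ₚFₚ[a₁+ℓ,…,a_p+ℓ; b₁+ℓ,…,b_p+ℓ; z]`, with constants `C, γ`
independent of `ℓ`, `N` and `z`. -/
theorem pFp_shifted_bound (p : ℕ) (hp : 0 < p) (a b : Fin p → ℂ) :
    ∃ C > (0 : ℝ), ∃ γ > (0 : ℝ), ∀ N : ℕ, 0 < N → (∀ j, 0 < (b j + N + 1).re) →
      ∀ ℓ : ℕ, N + 1 ≤ ℓ → ∀ z : ℂ,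
        ‖pFp (fun i => a i + ℓ) (fun j => b j + ℓ) z‖
          ≤ C * Real.exp (γ * ‖z‖) := by
  set M : Fin p → ℝ := fun j => max (‖a j‖ - (b j).re) 0 with hM
  set δ : Fin p → ℝ := fun j => dlt ((b j).re) with hδ
  set γ : ℝ := ∏ j, (1 + M j / δ j) with hγ
  have hfac : ∀ j, (1:ℝ) ≤ 1 + M j / δ j := fun j => by
    have : 0 ≤ M j / δ j := div_nonneg (le_max_right _ _) (dlt_pos _).le
    linarith
  have hγ1 : (1:ℝ) ≤ γ := by
    have := Finset.prod_le_prod (s := Finset.univ) (f := fun _ : Fin p => (1:ℝ)) (g := fun j => 1 + M j / δ j)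
      (fun j _ => zero_le_one) (fun j _ => hfac j)
    simpa using this
  refine ⟨1, one_pos, γ, by linarith, ?_⟩
  intro N hN hb ℓ hℓ z
  -- lower bound for the real parts
  have hbl : ∀ j : Fin p, 0 < (b j).re + ℓ := by
    intro j
    have := hb j
    simp only [Complex.add_re, Complex.natCast_re, Complex.one_re] at this
    have : (0:ℝ) < (b j).re + N + 1 := this
    have hle : (N:ℝ) + 1 ≤ ℓ := by exact_mod_cast hℓ
    linarith
  have hdl : ∀ j : Fin p, δ j ≤ (b j).re + ℓ := fun j => dlt_le _ _ (hbl j)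
  -- termwise bound
  have hterm : ∀ n : ℕ, ‖(∏ i, poch (a i + ℓ) n) / (∏ j, poch (b j + ℓ) n)
      * z ^ n / Nat.factorial n‖ ≤ (γ * ‖z‖) ^ n / Nat.factorial n := by
    intro n
    set A : ℝ := ∏ i, ∏ k ∈ Finset.range n, (‖a i‖ + ℓ + k) with hA
    set B : ℝ := ∏ j, ∏ k ∈ Finset.range n, ((b j).re + ℓ + k) with hB
    have hdpos : ∀ j : Fin p, ∀ k : ℕ, 0 < (b j).re + ℓ + k := by
      intro j k
      have := hbl j
      positivity
    have hBpos : 0 < B :=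
      Finset.prod_pos fun j _ => Finset.prod_pos fun k _ => hdpos j k
    have h1 : ‖∏ i, poch (a i + ℓ) n‖ ≤ A := by
      rw [norm_prod]
      refine Finset.prod_le_prod (fun i _ => (norm_nonneg _)) (fun i _ => ?_)
      unfold poch
      rw [norm_prod]
      refine Finset.prod_le_prod (fun k _ => (norm_nonneg _)) (fun k _ => ?_)
      calc ‖a i + ℓ + k‖ ≤ ‖a i‖ + ‖(ℓ:ℂ) + k‖ := by
            rw [add_assoc]; exact norm_add_le _ _
        _ = ‖a i‖ + (ℓ + k : ℝ) := by
            congr 1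
            rw [show ((ℓ:ℂ) + k) = ((ℓ + k : ℝ) : ℂ) by push_cast; ring]
            rw [Complex.norm_real, Real.norm_of_nonneg (by positivity)]
        _ = ‖a i‖ + ℓ + k := by ring
    have h2 : B ≤ ‖∏ j, poch (b j + ℓ) n‖ := by
      rw [norm_prod]
      refine Finset.prod_le_prod (fun j _ => Finset.prod_nonneg fun k _ => (hdpos j k).le)
        (fun j _ => ?_)
      unfold poch
      rw [norm_prod]
      refine Finset.prod_le_prod (fun k _ => (hdpos j k).le) (fun k _ => ?_)
      calc (b j).re + ℓ + k = (b j + ℓ + k).re := by simp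
        _ ≤ ‖b j + ℓ + k‖ := Complex.re_le_norm _
    have h3 : A ≤ γ ^ n * B := by
      have hpt : ∀ j : Fin p, ∀ k : ℕ,
          ‖a j‖ + ℓ + k ≤ (1 + M j / δ j) * ((b j).re + ℓ + k) := by
        intro j k
        have hd : δ j ≤ (b j).re + ℓ + k := by
          have := hdl j; have : δ j ≤ (b j).re + ℓ := this
          have hk : (0:ℝ) ≤ k := Nat.cast_nonneg k
          linarith
        have hMd : M j ≤ M j / δ j * ((b j).re + ℓ + k) := by
          have h0 : M j / δ j * δ j = M j := div_mul_cancel₀ (M j) (dlt_pos _).ne'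
          calc M j = M j / δ j * δ j := h0.symm
            _ ≤ M j / δ j * ((b j).re + ℓ + k) := mul_le_mul_of_nonneg_left hd
                (div_nonneg (le_max_right _ _) (dlt_pos _).le)
        have hMa : ‖a j‖ - (b j).re ≤ M j := le_max_left _ _
        nlinarith [hdpos j k]
      calc A ≤ ∏ i, ∏ k ∈ Finset.range n, ((1 + M i / δ i) * ((b i).re + ℓ + k)) := by
            refine Finset.prod_le_prod (fun i _ => Finset.prod_nonneg fun k _ => by positivity)
              (fun i _ => ?_)
            exact Finset.prod_le_prod (fun k _ => by positivity) (fun k _ => hpt i k)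
        _ = ∏ i, ((1 + M i / δ i) ^ n * ∏ k ∈ Finset.range n, ((b i).re + ℓ + k)) := by
            refine Finset.prod_congr rfl fun i _ => ?_
            rw [Finset.prod_mul_distrib, Finset.prod_const, Finset.card_range]
        _ = γ ^ n * B := by
            rw [Finset.prod_mul_distrib, ← Finset.prod_pow]
    have habs : ‖(∏ i, poch (a i + ℓ) n) / (∏ j, poch (b j + ℓ) n)
        * z ^ n / Nat.factorial n‖
        = ‖∏ i, poch (a i + ℓ) n‖ / ‖∏ j, poch (b j + ℓ) n‖
          * ‖z‖ ^ n / Nat.factorial n := by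
      rw [norm_div, norm_mul, norm_div, norm_pow]
      simp [Complex.norm_natCast]
    rw [habs, mul_pow, mul_div_assoc, mul_div_assoc]
    refine mul_le_mul_of_nonneg_right ?_ (by positivity)
    calc ‖∏ i, poch (a i + ℓ) n‖ / ‖∏ j, poch (b j + ℓ) n‖
        ≤ A / B := div_le_div₀ (le_trans (norm_nonneg _) h1) h1 hBpos h2
      _ ≤ γ ^ n := by rw [div_le_iff₀ hBpos]; exact h3
  -- summability and conclusion
  have hsum : Summable (fun n : ℕ => (γ * ‖z‖) ^ n / (Nat.factorial n : ℝ)) :=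
    Real.summable_pow_div_factorial _
  have hsumf : Summable (fun n : ℕ => ‖(∏ i, poch (a i + ℓ) n)
      / (∏ j, poch (b j + ℓ) n) * z ^ n / Nat.factorial n‖) :=
    Summable.of_nonneg_of_le (fun n => norm_nonneg _) hterm hsum
  calc ‖pFp (fun i => a i + ℓ) (fun j => b j + ℓ) z‖
      ≤ ∑' n : ℕ, ‖(∏ i, poch (a i + ℓ) n)
          / (∏ j, poch (b j + ℓ) n) * z ^ n / Nat.factorial n‖ := by
        unfold pFp
        have h := norm_tsum_le_tsum_norm (f := fun n : ℕ => (∏ i, poch (a i + ℓ) n)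
          / (∏ j, poch (b j + ℓ) n) * z ^ n / Nat.factorial n)
          hsumf
        exact h
    _ ≤ ∑' n : ℕ, (γ * ‖z‖) ^ n / (Nat.factorial n : ℝ) :=
        Summable.tsum_le_tsum hterm hsumf hsum
    _ = Real.exp (γ * ‖z‖) := by
        rw [Real.exp_eq_exp_ℝ, NormedSpace.exp_eq_tsum_div]
    _ = 1 * Real.exp (γ * ‖z‖) := (one_mul _).symm
end

section
/- Let a, b, c ∈ ℂ, c' ∈ ℂ ∖ ℤ_{≤0}, a − b ∉ ℤ and a − c ∉ ℤ. Then the series V₁(x,y) := Σ_{n=0}^∞ ((a)_n (c−b)_n / (a−b+1)_n) · ₂F₂[a−c+1, a+n; c', a−b+1+n; y/(1−x)] · (1−x)^{−n}/n! and V₂(x,y) := Σ_{n=0}^∞ ((b)_n (c−a)_n / (b−a+1)_n) · ₂F₂[a−c+1, a−b−n; c', a−c+1−n; y] · (1−x)^{−n}/n! converge absolutely for every x ∈ ℂ with |x − 1| > 1 and every y ∈ ℂ. -/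
/-- The generalized hypergeometric function `₂F₂[a₁, a₂; b₁, b₂; z]`. -/
noncomputable def F22 (a1 a2 b1 b2 z : ℂ) : ℂ :=
  ∑' n : ℕ, poch a1 n * poch a2 n / (poch b1 n * poch b2 n) * z ^ n / Nat.factorial n

open Filter

lemma poch_succ (w : ℂ) (k : ℕ) : poch w (k+1) = poch w k * (w + k) :=
  Finset.prod_range_succ _ _

lemma abs_poch (w : ℂ) (k : ℕ) :
    ‖poch w k‖ = ∏ i ∈ Finset.range k, ‖w + i‖ :=
  norm_prod _ _

lemma poch_ne_zero_s7 {w : ℂ} (h : ∀ j : ℕ, w + j ≠ 0) (k : ℕ) : poch w k ≠ 0 :=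
  Finset.prod_ne_zero_iff.mpr fun i _ => h i

lemma abs_poch_le {β γ : ℂ} {K : ℝ}
    (h : ∀ j : ℕ, ‖β + j‖ ≤ K * ‖γ + j‖) (k : ℕ) :
    ‖poch β k‖ ≤ K ^ k * ‖poch γ k‖ := by
  rw [abs_poch, abs_poch]
  have h2 := Finset.prod_le_prod (s := Finset.range k)
    (f := fun i : ℕ => ‖β + i‖) (g := fun i : ℕ => K * ‖γ + i‖)
    (fun i _ => norm_nonneg _) (fun i _ => h i)
  rwa [Finset.prod_mul_distrib, Finset.prod_const, Finset.card_range] at h2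

lemma abs_add_nat_le (w : ℂ) (k : ℕ) : ‖w + k‖ ≤ ‖w‖ + k := by
  simpa using norm_add_le w k

lemma le_abs_add_nat (w : ℂ) (k : ℕ) : (k : ℝ) - ‖w‖ ≤ ‖w + k‖ := by
  have h := norm_add_le (w + (k : ℂ)) (-w)
  have e : (w + (k : ℂ)) + (-w) = (k : ℂ) := by ring
  rw [e, norm_neg, Complex.norm_natCast] at h
  linarith

lemma exists_lb_nat (w : ℂ) (h : ∀ j : ℕ, w + j ≠ 0) :
    ∃ δ : ℝ, 0 < δ ∧ ∀ j : ℕ, δ ≤ ‖w + j‖ := by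
  set N : ℕ := ⌈‖w‖⌉₊ + 1 with hN
  refine ⟨min 1 ((Finset.range N).inf' (Finset.nonempty_range_iff.mpr (by omega)) fun j => ‖w + j‖), ?_, ?_⟩
  · refine lt_min one_pos ?_
    rw [Finset.lt_inf'_iff]
    exact fun j _ => norm_pos_iff.mpr (h j)
  · intro j
    by_cases hj : j < N
    · exact le_trans (min_le_right _ _) (Finset.inf'_le _ (Finset.mem_range.mpr hj))
    · push_neg at hj
      refine le_trans (min_le_left _ _) ?_
      have h1 : (N : ℝ) ≤ j := Nat.cast_le.mpr hj
      have h2 : ‖w‖ ≤ ⌈‖w‖⌉₊ := Nat.le_ceil _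
      have h3 := le_abs_add_nat w j
      have h4 : ((⌈‖w‖⌉₊ + 1 : ℕ) : ℝ) = (⌈‖w‖⌉₊ : ℝ) + 1 := by push_cast; ring
      rw [hN, h4] at h1
      linarith

lemma exists_lb_int (w : ℂ) (h : ∀ m : ℤ, w + m ≠ 0) :
    ∃ δ : ℝ, 0 < δ ∧ ∀ m : ℤ, δ ≤ ‖w + m‖ := by
  set N : ℤ := ⌈‖w‖⌉ + 1 with hN
  have hne : (Finset.Icc (-N) N).Nonempty := by
    refine ⟨0, Finset.mem_Icc.mpr ⟨?_, ?_⟩⟩ <;>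
      · have : (0:ℤ) ≤ ⌈‖w‖⌉ := Int.ceil_nonneg (norm_nonneg _)
        omega
  refine ⟨min 1 ((Finset.Icc (-N) N).inf' hne fun m => ‖w + m‖), ?_, ?_⟩
  · refine lt_min one_pos ?_
    rw [Finset.lt_inf'_iff]
    exact fun m _ => norm_pos_iff.mpr (h m)
  · intro m
    by_cases hm : m ∈ Finset.Icc (-N) N
    · exact le_trans (min_le_right _ _) (Finset.inf'_le _ hm)
    · refine le_trans (min_le_left _ _) ?_
      have habs : ‖(m : ℂ)‖ = |(m : ℝ)| := Complex.norm_intCast m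
      have htri : |(m : ℝ)| - ‖w‖ ≤ ‖w + m‖ := by
        have h' := norm_add_le (w + (m : ℂ)) (-w)
        have e : (w + (m : ℂ)) + (-w) = (m : ℂ) := by ring
        rw [e, norm_neg, habs] at h'
        linarith
      have hNm : (N : ℝ) ≤ |(m : ℝ)| := by
        rw [Finset.mem_Icc] at hm
        push_neg at hm
        have h0 : (0:ℤ) ≤ ⌈‖w‖⌉ := Int.ceil_nonneg (norm_nonneg _)
        have hNm2 : N ≤ |m| := by
          rcases le_or_gt (-N) m with h' | h'
          · have := hm h'
            rw [abs_of_pos (by omega)]; omega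
          · rw [abs_of_neg (by omega)]; omega
        calc (N : ℝ) ≤ ((|m| : ℤ) : ℝ) := by exact_mod_cast hNm2
          _ = |(m : ℝ)| := Int.cast_abs
      have h2 : ‖w‖ ≤ ⌈‖w‖⌉ := Int.le_ceil _
      have h4 : ((⌈‖w‖⌉ + 1 : ℤ) : ℝ) = (⌈‖w‖⌉ : ℝ) + 1 := by push_cast; ring
      rw [hN, h4] at hNm
      linarith

lemma quad_ineq {A B C s n : ℝ} (hA : 0 ≤ A) (hB : 0 ≤ B) (hC : 0 ≤ C) (hs : 1 < s)
    (hn1 : 1 ≤ n) (hn : A + B + 2*s*C + A*B + 1 ≤ (s-1)*n) :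
    (n+A)*(n+B) ≤ s*((n-C)*(n+1)) := by
  have hn0 : (0:ℝ) ≤ n := le_trans zero_le_one hn1
  have hs0 : (0:ℝ) ≤ s := le_of_lt (lt_trans one_pos hs)
  have hn1' : (0:ℝ) ≤ n - 1 := by linarith
  nlinarith [mul_le_mul_of_nonneg_left hn hn0,
    mul_nonneg (mul_nonneg hs0 hC) hn1', mul_nonneg (mul_nonneg hA hB) hn1',
    mul_nonneg hs0 hn1']

lemma lin_quad {A C' C k : ℝ} (hC : 0 ≤ C) (hC' : 0 ≤ C') (h1 : A ≤ k) (h2 : 2*C'+1 ≤ k)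
    (h3 : 8*C ≤ k+1) : (k+A)*C ≤ (1/2)*((k-C')*(k+1)) := by nlinarith

lemma u_summable (α c' : ℂ) (hc' : ∀ j : ℕ, c' + j ≠ 0) (C : ℝ) (hC : 0 ≤ C) :
    Summable (fun k : ℕ =>
      ‖poch α k‖ / ‖poch c' k‖ * C ^ k / (Nat.factorial k)) := by
  set u : ℕ → ℝ := fun k =>
    ‖poch α k‖ / ‖poch c' k‖ * C ^ k / (Nat.factorial k) with hu
  have hu0 : ∀ k, 0 ≤ u k := fun k => by
    rw [hu]; positivity
  apply summable_of_ratio_norm_eventually_le (r := 1/2) (by norm_num)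
  rw [eventually_atTop]
  refine ⟨⌈‖α‖⌉₊ + ⌈2 * ‖c'‖ + 1⌉₊ + ⌈8 * C⌉₊, fun k hk => ?_⟩
  have hk1 : ‖α‖ ≤ (k : ℝ) := by
    calc ‖α‖ ≤ (⌈‖α‖⌉₊ : ℝ) := Nat.le_ceil _
      _ ≤ (k : ℝ) := by exact_mod_cast le_trans (by omega) hk
  have hk2 : 2 * ‖c'‖ + 1 ≤ (k : ℝ) := by
    calc 2 * ‖c'‖ + 1 ≤ (⌈2 * ‖c'‖ + 1⌉₊ : ℝ) := Nat.le_ceil _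
      _ ≤ (k : ℝ) := by exact_mod_cast le_trans (by omega) hk
  have hk3 : 8 * C ≤ (k : ℝ) + 1 := by
    calc 8 * C ≤ (⌈8 * C⌉₊ : ℝ) := Nat.le_ceil _
      _ ≤ (k : ℝ) + 1 := by
        have : (⌈8*C⌉₊ : ℝ) ≤ (k:ℝ) := by exact_mod_cast le_trans (by omega) hk
        linarith
  -- key inequality
  have hcub : ‖α + k‖ * C ≤ (1/2) * (‖c' + k‖ * ((k:ℝ) + 1)) := by
    have hub : ‖α + k‖ ≤ (k : ℝ) + ‖α‖ := by
      have := abs_add_nat_le α k; linarith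
    have hlb : (k : ℝ) - ‖c'‖ ≤ ‖c' + k‖ := le_abs_add_nat c' k
    have key := lin_quad (A := ‖α‖) (C' := ‖c'‖) (C := C) (k := (k:ℝ))
      hC (norm_nonneg _) hk1 hk2 hk3
    have hk0 : (0:ℝ) ≤ (k:ℝ) + 1 := by positivity
    nlinarith [mul_nonneg hC (norm_nonneg (α + (k:ℂ)))]
  -- recurrence
  have hcne : ‖poch c' k‖ ≠ 0 := by
    simpa using (norm_pos_iff.mpr (poch_ne_zero_s7 hc' k)).ne'
  have hckne : ‖c' + k‖ ≠ 0 := by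
    simpa using (norm_pos_iff.mpr (hc' k)).ne'
  have hfac : ((Nat.factorial k : ℝ)) ≠ 0 := by positivity
  have hrec : u (k+1) = u k * (‖α + k‖ * C / (‖c' + k‖ * ((k:ℝ)+1))) := by
    rw [hu]
    simp only
    rw [poch_succ, poch_succ, norm_mul, norm_mul, pow_succ, Nat.factorial_succ]
    push_cast
    field_simp
  rw [Real.norm_eq_abs, Real.norm_eq_abs, abs_of_nonneg (hu0 _), abs_of_nonneg (hu0 _), hrec]
  have hw : ‖α + k‖ * C / (‖c' + k‖ * ((k:ℝ)+1)) ≤ 1/2 := by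
    rw [div_le_iff₀ (by positivity : (0:ℝ) < ‖c' + k‖ * ((k:ℝ)+1))]
    · calc ‖α + k‖ * C ≤ (1/2) * (‖c' + k‖ * ((k:ℝ) + 1)) := hcub
        _ = 1/2 * (‖c' + k‖ * ((k:ℝ)+1)) := by ring
  calc u k * (‖α + k‖ * C / (‖c' + k‖ * ((k:ℝ)+1)))
      ≤ u k * (1/2) := mul_le_mul_of_nonneg_left hw (hu0 k)
    _ = 1/2 * u k := by ring

lemma F22_le (α β c' γ z : ℂ) (K : ℝ) (hK : 0 ≤ K)
    (hc' : ∀ j : ℕ, c' + j ≠ 0) (hγ : ∀ j : ℕ, γ + j ≠ 0)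
    (hβγ : ∀ j : ℕ, ‖β + j‖ ≤ K * ‖γ + j‖) :
    ‖F22 α β c' γ z‖ ≤
      ∑' k : ℕ, ‖poch α k‖ / ‖poch c' k‖ *
        (K * ‖z‖) ^ k / (Nat.factorial k) := by
  have hu := u_summable α c' hc' (K * ‖z‖) (by positivity)
  refine tsum_of_norm_bounded hu.hasSum fun k => ?_
  simp only [norm_div, norm_mul, norm_pow, Complex.norm_natCast]
  have h1 : ‖poch β k‖ ≤ K ^ k * ‖poch γ k‖ := abs_poch_le hβγ k
  have h2 : 0 < ‖poch γ k‖ := norm_pos_iff.mpr (poch_ne_zero_s7 hγ k)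
  have h3 : 0 < ‖poch c' k‖ := norm_pos_iff.mpr (poch_ne_zero_s7 hc' k)
  have hfac : (0:ℝ) < (Nat.factorial k : ℝ) := by positivity
  calc ‖poch α k‖ * ‖poch β k‖ /
        (‖poch c' k‖ * ‖poch γ k‖) * ‖z‖ ^ k /
        (Nat.factorial k : ℝ)
      ≤ ‖poch α k‖ * (K ^ k * ‖poch γ k‖) /
        (‖poch c' k‖ * ‖poch γ k‖) * ‖z‖ ^ k /
        (Nat.factorial k : ℝ) := by gcongr
    _ = ‖poch α k‖ / ‖poch c' k‖ *
        (K * ‖z‖) ^ k / (Nat.factorial k : ℝ) := by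
        rw [mul_pow]; field_simp

lemma main_part (p q d : ℂ) (hd : ∀ n : ℕ, d + n ≠ 0) (M r : ℝ) (hM : 0 ≤ M)
    (hr0 : 0 < r) (hr1 : r < 1) (g : ℕ → ℝ) (hg0 : ∀ n, 0 ≤ g n)
    (hg : ∀ n, g n ≤ ‖poch p n‖ * ‖poch q n‖ /
      ‖poch d n‖ * M * r ^ n / (Nat.factorial n)) :
    Summable g := by
  set G : ℕ → ℝ := fun n => ‖poch p n‖ * ‖poch q n‖ /
      ‖poch d n‖ * M * r ^ n / (Nat.factorial n) with hG
  have hG0 : ∀ n, 0 ≤ G n := fun n => by rw [hG]; positivity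
  set s : ℝ := (1 + r) / (2 * r) with hs
  have hs1 : 1 < s := by
    rw [hs, lt_div_iff₀ (by linarith)]
    linarith
  set A := ‖p‖ with hA
  set B := ‖q‖ with hB
  set Cc := ‖d‖ with hCc
  have hA0 : 0 ≤ A := norm_nonneg _
  have hB0 : 0 ≤ B := norm_nonneg _
  have hC0 : 0 ≤ Cc := norm_nonneg _
  have hGsum : Summable G := by
    apply summable_of_ratio_norm_eventually_le (r := (1 + r) / 2) (by linarith)
    rw [eventually_atTop]
    refine ⟨⌈(A + B + 2*s*Cc + A*B + 1) / (s - 1)⌉₊ + 1, fun n hn => ?_⟩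
    have hn1 : (1 : ℝ) ≤ (n : ℝ) := by
      have : 1 ≤ n := le_trans (by omega) hn
      exact_mod_cast this
    have hnB : A + B + 2*s*Cc + A*B + 1 ≤ (s - 1) * n := by
      have h1 : (A + B + 2*s*Cc + A*B + 1) / (s - 1) ≤ (n : ℝ) := by
        calc (A + B + 2*s*Cc + A*B + 1) / (s - 1)
            ≤ (⌈(A + B + 2*s*Cc + A*B + 1) / (s - 1)⌉₊ : ℝ) := Nat.le_ceil _
          _ ≤ (n : ℝ) := by exact_mod_cast le_trans (by omega) hn
      rw [div_le_iff₀ (by linarith : (0:ℝ) < s - 1)] at h1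
      linarith [h1]
    have hq := quad_ineq hA0 hB0 hC0 hs1 hn1 hnB
    -- key: |p+n| |q+n| r ≤ (1+r)/2 * (|d+n| (n+1))
    have hub1 : ‖p + n‖ ≤ (n:ℝ) + A := by
      have := abs_add_nat_le p n; rw [hA]; linarith
    have hub2 : ‖q + n‖ ≤ (n:ℝ) + B := by
      have := abs_add_nat_le q n; rw [hB]; linarith
    have hlb : (n:ℝ) - Cc ≤ ‖d + n‖ := le_abs_add_nat d n
    have hkey : ‖p + n‖ * ‖q + n‖ * r ≤
        ((1 + r)/2) * (‖d + n‖ * ((n:ℝ) + 1)) := by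
      have e1 : ‖p + n‖ * ‖q + n‖ ≤ ((n:ℝ) + A) * ((n:ℝ) + B) :=
        mul_le_mul hub1 hub2 (norm_nonneg _) (by linarith)
      have e2 : ((n:ℝ) + A) * ((n:ℝ) + B) * r ≤ s * (((n:ℝ) - Cc) * ((n:ℝ) + 1)) * r :=
        mul_le_mul_of_nonneg_right hq (le_of_lt hr0)
      have e3 : s * (((n:ℝ) - Cc) * ((n:ℝ) + 1)) * r = ((1+r)/2) * (((n:ℝ) - Cc) * ((n:ℝ)+1)) := by
        rw [hs]; field_simp
      have e4 : ((1+r)/2) * (((n:ℝ) - Cc) * ((n:ℝ)+1)) ≤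
          ((1+r)/2) * (‖d + n‖ * ((n:ℝ)+1)) := by
        have : ((n:ℝ) - Cc) * ((n:ℝ)+1) ≤ ‖d + n‖ * ((n:ℝ)+1) :=
          mul_le_mul_of_nonneg_right hlb (by linarith)
        exact mul_le_mul_of_nonneg_left this (by linarith)
      calc ‖p + n‖ * ‖q + n‖ * r
          ≤ ((n:ℝ) + A) * ((n:ℝ) + B) * r :=
            mul_le_mul_of_nonneg_right e1 (le_of_lt hr0)
        _ ≤ s * (((n:ℝ) - Cc) * ((n:ℝ) + 1)) * r := e2
        _ = ((1+r)/2) * (((n:ℝ) - Cc) * ((n:ℝ)+1)) := e3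
        _ ≤ ((1+r)/2) * (‖d + n‖ * ((n:ℝ)+1)) := e4
    have hdne : ‖poch d n‖ ≠ 0 := (norm_pos_iff.mpr (poch_ne_zero_s7 hd n)).ne'
    have hdkne : ‖d + n‖ ≠ 0 := (norm_pos_iff.mpr (hd n)).ne'
    have hfac : ((Nat.factorial n : ℝ)) ≠ 0 := by positivity
    have hrec : G (n+1) = G n *
        (‖p + n‖ * ‖q + n‖ * r /
          (‖d + n‖ * ((n:ℝ) + 1))) := by
      rw [hG]
      simp only
      rw [poch_succ, poch_succ, poch_succ, norm_mul, norm_mul, norm_mul, pow_succ,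
        Nat.factorial_succ]
      push_cast
      field_simp
    rw [Real.norm_eq_abs, Real.norm_eq_abs, abs_of_nonneg (hG0 _), abs_of_nonneg (hG0 _), hrec]
    have hw : ‖p + n‖ * ‖q + n‖ * r /
        (‖d + n‖ * ((n:ℝ) + 1)) ≤ (1 + r) / 2 := by
      rw [div_le_iff₀ (by positivity : (0:ℝ) < ‖d + n‖ * ((n:ℝ)+1))]
      exact hkey
    calc G n * (‖p + n‖ * ‖q + n‖ * r /
          (‖d + n‖ * ((n:ℝ) + 1)))
        ≤ G n * ((1 + r)/2) := mul_le_mul_of_nonneg_left hw (hG0 n)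
      _ = (1 + r)/2 * G n := by ring
  exact hGsum.of_nonneg_of_le hg0 hg

/-- The series `V₁(x,y)` and `V₂(x,y)` converge absolutely for `|x-1| > 1` and all `y`. -/
theorem V1_V2_abs_convergent (a b c c' : ℂ)
    (hc' : ∀ m : ℕ, c' ≠ -(m : ℂ))
    (hab : ∀ m : ℤ, a - b ≠ (m : ℂ)) (hac : ∀ m : ℤ, a - c ≠ (m : ℂ))
    (x y : ℂ) (hx : 1 < ‖x - 1‖) :
    Summable (fun n : ℕ => ‖poch a n * poch (c - b) n / poch (a - b + 1) n *
        F22 (a - c + 1) (a + n) c' (a - b + 1 + n) (y / (1 - x)) * (1 - x) ^ (-(n : ℤ)) /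
          Nat.factorial n‖) ∧
    Summable (fun n : ℕ => ‖poch b n * poch (c - a) n / poch (b - a + 1) n *
        F22 (a - c + 1) (a - b - n) c' (a - c + 1 - n) y * (1 - x) ^ (-(n : ℤ)) /
          Nat.factorial n‖) := by
  have hcj : ∀ j : ℕ, c' + (j : ℂ) ≠ 0 := fun j hj => hc' j (by linear_combination hj)
  have h1x1 : 1 < ‖1 - x‖ := by
    rwa [show (1 : ℂ) - x = -(x - 1) by ring, norm_neg]
  set r : ℝ := (‖1 - x‖)⁻¹ with hr
  have hr0 : 0 < r := inv_pos.mpr (by linarith)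
  have hr1 : r < 1 := inv_lt_one_of_one_lt₀ h1x1
  have hzpow : ∀ n : ℕ, ‖(1 - x) ^ (-(n : ℤ))‖ = r ^ n := by
    intro n
    rw [norm_zpow, zpow_neg, zpow_natCast, hr, inv_pow]
  constructor
  · -- V₁
    have hd1 : ∀ j : ℕ, (a - b + 1) + (j : ℂ) ≠ 0 := by
      intro j hj
      exact hab (-(1 + (j : ℤ))) (by push_cast; linear_combination hj)
    obtain ⟨δ, hδ0, hδ⟩ := exists_lb_nat (a - b + 1) hd1
    set K : ℝ := 1 + ‖b - 1‖ / δ with hK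
    have hK0 : 0 ≤ K := by positivity
    set M : ℝ := ∑' k : ℕ, ‖poch (a - c + 1) k‖ / ‖poch c' k‖ *
        (K * ‖y / (1 - x)‖) ^ k / (Nat.factorial k) with hM
    have hM0 : 0 ≤ M := tsum_nonneg fun k => by positivity
    have hFb : ∀ n : ℕ,
        ‖F22 (a - c + 1) (a + n) c' (a - b + 1 + n) (y / (1 - x))‖ ≤ M := by
      intro n
      rw [hM]
      apply F22_le _ _ _ _ _ K hK0 hcj
      · intro j hj
        apply hd1 (n + j)
        push_cast
        linear_combination hj
      · intro j
        have hδnj : δ ≤ ‖(a - b + 1 + n) + j‖ := by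
          have h := hδ (n + j)
          have e2 : (a - b + 1) + ((n + j : ℕ) : ℂ) = (a - b + 1 + n) + j := by
            push_cast; ring
          rwa [e2] at h
        have htri : ‖(a + n) + j‖ ≤
            ‖(a - b + 1 + n) + j‖ + ‖b - 1‖ := by
          rw [show (a + (n:ℂ)) + j = ((a - b + 1 + n) + j) + (b - 1) by ring]
          exact norm_add_le _ _
        have hb1 : ‖b - 1‖ ≤
            ‖b - 1‖ / δ * ‖(a - b + 1 + n) + j‖ := by
          rw [div_mul_eq_mul_div, le_div_iff₀ hδ0]
          exact mul_le_mul_of_nonneg_left hδnj (norm_nonneg _)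
        calc ‖(a + n) + j‖
            ≤ ‖(a - b + 1 + n) + j‖ + ‖b - 1‖ := htri
          _ ≤ ‖(a - b + 1 + n) + j‖ +
              ‖b - 1‖ / δ * ‖(a - b + 1 + n) + j‖ := by linarith
          _ = K * ‖(a - b + 1 + n) + j‖ := by rw [hK]; ring
    apply main_part a (c - b) (a - b + 1) hd1 M r hM0 hr0 hr1
    · intro n; exact norm_nonneg _
    · intro n
      simp only [norm_div, norm_mul, Complex.norm_natCast, hzpow n]
      gcongr
      exact hFb n
  · -- V₂
    have hd2 : ∀ j : ℕ, (b - a + 1) + (j : ℂ) ≠ 0 := by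
      intro j hj
      exact hab (1 + (j : ℤ)) (by push_cast; linear_combination -hj)
    have hint : ∀ m : ℤ, (a - c + 1) + (m : ℂ) ≠ 0 := by
      intro m hm
      exact hac (-(1 + m)) (by push_cast; linear_combination hm)
    obtain ⟨δ, hδ0, hδ⟩ := exists_lb_int (a - c + 1) hint
    set K : ℝ := 1 + ‖c - b - 1‖ / δ with hK
    have hK0 : 0 ≤ K := by positivity
    set M : ℝ := ∑' k : ℕ, ‖poch (a - c + 1) k‖ / ‖poch c' k‖ *
        (K * ‖y‖) ^ k / (Nat.factorial k) with hM
    have hM0 : 0 ≤ M := tsum_nonneg fun k => by positivity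
    have hFb : ∀ n : ℕ,
        ‖F22 (a - c + 1) (a - b - n) c' (a - c + 1 - n) y‖ ≤ M := by
      intro n
      rw [hM]
      apply F22_le _ _ _ _ _ K hK0 hcj
      · intro j hj
        apply hint ((j : ℤ) - (n : ℤ))
        push_cast
        linear_combination hj
      · intro j
        have hδnj : δ ≤ ‖(a - c + 1 - n) + j‖ := by
          have h := hδ ((j : ℤ) - (n : ℤ))
          have e2 : (a - c + 1) + (((j : ℤ) - (n : ℤ) : ℤ) : ℂ) = (a - c + 1 - n) + j := by
            push_cast; ring
          rwa [e2] at h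
        have htri : ‖(a - b - n) + j‖ ≤
            ‖(a - c + 1 - n) + j‖ + ‖c - b - 1‖ := by
          rw [show (a - b - (n:ℂ)) + j = ((a - c + 1 - n) + j) + (c - b - 1) by ring]
          exact norm_add_le _ _
        have hb1 : ‖c - b - 1‖ ≤
            ‖c - b - 1‖ / δ * ‖(a - c + 1 - n) + j‖ := by
          rw [div_mul_eq_mul_div, le_div_iff₀ hδ0]
          exact mul_le_mul_of_nonneg_left hδnj (norm_nonneg _)
        calc ‖(a - b - n) + j‖
            ≤ ‖(a - c + 1 - n) + j‖ + ‖c - b - 1‖ := htri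
          _ ≤ ‖(a - c + 1 - n) + j‖ +
              ‖c - b - 1‖ / δ * ‖(a - c + 1 - n) + j‖ := by linarith
          _ = K * ‖(a - c + 1 - n) + j‖ := by rw [hK]; ring
    apply main_part b (c - a) (b - a + 1) hd2 M r hM0 hr0 hr1
    · intro n; exact norm_nonneg _
    · intro n
      simp only [norm_div, norm_mul, Complex.norm_natCast, hzpow n]
      gcongr
      exact hFb n
end

section
/- Let a, b ∈ ℂ and c, d ∈ ℂ ∖ ℤ, and fix z ∈ ℂ. Then for every positive integer N, ₂F₂[a−n, b; c−n, d−n; z] = Σ_{k=0}^{N−1} ((a−n)_k (b)_k)/((c−n)_k (d−n)_k) · z^k/k! + O(n^{−N}) as n → +∞ through positive integer values; i.e., there exist C > 0 and n₀ ∈ ℕ such that for all integers n ≥ n₀ the difference between the left-hand side and the finite sum is bounded in modulus by C n^{−N}. -/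
open Finset Nat



noncomputable abbrev Complex.abs : AbsoluteValue ℂ ℝ := NormedField.toAbsoluteValue ℂ

lemma natdist_cast (m i : ℕ) : (Nat.dist m i : ℝ) = |(m:ℝ) - i| := by
  rcases le_total i m with h | h
  · have h' : (i:ℝ) ≤ m := by exact_mod_cast h
    rw [Nat.dist_eq_sub_of_le_right h, abs_of_nonneg (by linarith)]
    push_cast [h]; ring
  · have h' : (m:ℝ) ≤ i := by exact_mod_cast h
    rw [Nat.dist_eq_sub_of_le h, abs_of_nonpos (by linarith)]
    push_cast [h]; ring

lemma choose_le_two_pow' (n k : ℕ) : n.choose k ≤ 2^n := by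
  rcases le_or_gt n k with h | h
  · rcases lt_or_eq_of_le h with h | h
    · simp [Nat.choose_eq_zero_of_lt h]
    · subst h; simp [Nat.choose_self]
      exact Nat.one_le_two_pow
  · calc n.choose k ≤ ∑ m ∈ range (n+1), n.choose m :=
        Finset.single_le_sum (fun _ _ => Nat.zero_le _) (Finset.mem_range.2 (Nat.lt_succ_of_le h.le))
    _ = 2^n := Nat.sum_range_choose n

lemma prod_sub_eq_factorial (j : ℕ) : ∏ i ∈ range j, (j - i) = j ! := by
  have := Finset.prod_range_reflect (fun i => i + 1) j
  rw [Finset.prod_range_add_one_eq_factorial] at this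
  rw [← this]
  apply Finset.prod_congr rfl
  intro i hi
  have hi' := Finset.mem_range.1 hi
  omega

lemma Qfact (m j : ℕ) : j ! ≤ (j+1) * 2^j * ∏ i ∈ Finset.range j, max 1 (Nat.dist m i) := by
  rcases le_or_gt j m with h | h
  · have h1 : j ! ≤ ∏ i ∈ range j, max 1 (Nat.dist m i) := by
      rw [← prod_sub_eq_factorial j]
      apply Finset.prod_le_prod'
      intro i hi
      have hi' := Finset.mem_range.1 hi
      have : Nat.dist m i = m - i := Nat.dist_eq_sub_of_le_right (le_trans hi'.le h)
      rw [this]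
      exact le_max_of_le_right (by omega)
    calc j ! ≤ ∏ i ∈ range j, max 1 (Nat.dist m i) := h1
    _ ≤ (j+1) * 2^j * ∏ i ∈ range j, max 1 (Nat.dist m i) :=
        Nat.le_mul_of_pos_left _ (by positivity)
  · -- j > m
    have key : j ! ≤ (j+1) * 2^j * (m ! * (j - 1 - m)!) := by
      have h1 : j.choose m * m ! * (j - m)! = j ! := Nat.choose_mul_factorial_mul_factorial h.le
      have h2 : (j - m) = (j - 1 - m) + 1 := by omega
      have h3 : (j - m)! = ((j-1-m) + 1) * (j - 1 - m)! := by rw [h2, Nat.factorial_succ]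
      calc j ! = j.choose m * m ! * ((j-1-m+1) * (j-1-m)!) := by rw [← h3, h1]
      _ ≤ 2^j * m ! * ((j+1) * (j-1-m)!) := by
          apply Nat.mul_le_mul
          · exact Nat.mul_le_mul_right _ (choose_le_two_pow' j m)
          · exact Nat.mul_le_mul_right _ (by omega)
      _ = (j+1) * 2^j * (m ! * (j-1-m)!) := by ring
    refine key.trans ?_
    apply Nat.mul_le_mul_left
    -- show m ! * (j-1-m)! ≤ ∏
    have hsplit : ∏ i ∈ range j, max 1 (Nat.dist m i)
        = (∏ i ∈ Finset.Ico 0 m, max 1 (Nat.dist m i)) * ∏ i ∈ Finset.Ico m j, max 1 (Nat.dist m i) := by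
      rw [Finset.prod_Ico_consecutive _ (Nat.zero_le m) h.le, ← Finset.range_eq_Ico]
    have h1 : ∏ i ∈ Finset.Ico 0 m, max 1 (Nat.dist m i) = m ! := by
      rw [← Finset.range_eq_Ico, ← prod_sub_eq_factorial m]
      apply Finset.prod_congr rfl
      intro i hi
      have hi' := Finset.mem_range.1 hi
      rw [Nat.dist_eq_sub_of_le_right hi'.le]
      omega
    have h2 : (j - 1 - m)! ≤ ∏ i ∈ Finset.Ico m j, max 1 (Nat.dist m i) := by
      have hs : ∏ i ∈ Finset.Ico m j, max 1 (Nat.dist m i)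
          = (∏ i ∈ Finset.Ico m (m+1), max 1 (Nat.dist m i)) * ∏ i ∈ Finset.Ico (m+1) j, max 1 (Nat.dist m i) := by
        rw [Finset.prod_Ico_consecutive _ (by omega) (by omega)]
      have h3 : ∏ i ∈ Finset.Ico (m+1) j, max 1 (Nat.dist m i) = (j - 1 - m)! := by
        rw [Finset.prod_Ico_eq_prod_range]
        have : ∀ i ∈ range (j - (m+1)), max 1 (Nat.dist m (m+1+i)) = i + 1 := by
          intro i hi
          have : Nat.dist m (m+1+i) = i + 1 := by
            rw [Nat.dist_eq_sub_of_le (by omega)]; omega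
          rw [this]; omega
        rw [Finset.prod_congr rfl this, Finset.prod_range_add_one_eq_factorial]
        congr 1; omega
      rw [hs, h3]
      exact Nat.le_mul_of_pos_left _ (by positivity)
    calc m ! * (j-1-m)! ≤ m ! * ∏ i ∈ Finset.Ico m j, max 1 (Nat.dist m i) :=
        Nat.mul_le_mul_left _ h2
    _ = ∏ i ∈ range j, max 1 (Nat.dist m i) := by rw [hsplit, h1]


lemma delta_int (c : ℂ) (hc : ∀ m : ℤ, c ≠ (m:ℂ)) :
    ∃ δ > (0:ℝ), ∀ m : ℤ, δ ≤ Complex.abs (c - m) := by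
  set f := Int.fract c.re with hf
  have hfd : f = c.re - ⌊c.re⌋ := rfl
  refine ⟨max |c.im| (min f (1 - f)), ?_, ?_⟩
  · rcases eq_or_ne c.im 0 with h | h
    · have hf0 : f ≠ 0 := by
        intro h0
        apply hc ⌊c.re⌋
        apply Complex.ext
        · simp only [Complex.intCast_re]
          rw [hfd] at h0; linarith
        · simpa using h
      have hf1 : f < 1 := Int.fract_lt_one _
      have hf0' : 0 < f := lt_of_le_of_ne (Int.fract_nonneg _) (Ne.symm hf0)
      exact lt_max_of_lt_right (lt_min hf0' (by linarith))
    · exact lt_max_of_lt_left (abs_pos.2 h)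
  · intro m
    apply max_le
    · calc |c.im| = |(c - m).im| := by simp
      _ ≤ Complex.abs (c - m) := Complex.abs_im_le_norm _
    · have habs : |c.re - (m:ℝ)| ≤ Complex.abs (c - m) := by
        have hre : (c - (m:ℂ)).re = c.re - m := by simp
        rw [← hre]; exact Complex.abs_re_le_norm _
      refine le_trans ?_ habs
      rcases le_or_gt m ⌊c.re⌋ with h | h
      · have h' : (m:ℝ) ≤ ⌊c.re⌋ := by exact_mod_cast h
        have h2 : f ≤ c.re - m := by rw [hfd]; linarith
        exact le_trans (min_le_left _ _) (le_trans h2 (le_abs_self _))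
      · have h' : (⌊c.re⌋:ℝ) + 1 ≤ m := by exact_mod_cast h
        have h2 : 1 - f ≤ m - c.re := by rw [hfd]; linarith
        exact le_trans (min_le_right _ _) (le_trans h2 (by rw [abs_sub_comm]; exact le_abs_self _))



lemma trm_eq_prod (a b c d z : ℂ) (n k : ℕ) :
    poch (a - n) k * poch b k / (poch (c - n) k * poch (d - n) k) * z ^ k / (Nat.factorial k : ℂ)
    = ∏ i ∈ Finset.range k, ((a - n + i) * (b + i) * z / ((c - n + i) * (d - n + i) * (i + 1))) := by
  rw [← Finset.prod_range_add_one_eq_factorial k]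
  push_cast
  simp only [poch, Finset.prod_div_distrib, Finset.prod_mul_distrib, Finset.prod_const,
    Finset.card_range]
  ring

lemma trm_bound (a b c d z : ℂ) (δc δd M B c₀ R : ℝ)
    (hδc : 0 < δc) (hδd : 0 < δd)
    (hcb : ∀ m : ℤ, δc ≤ Complex.abs (c - m)) (hdb : ∀ m : ℤ, δd ≤ Complex.abs (d - m))
    (hM : M = 1 + Complex.abs (a - c) / δc)
    (hB : B = Complex.abs b + 1)
    (hc₀ : c₀ = min δd 1 / (2 * (Complex.abs d + 1)))
    (hR : R = max 1 (M * B * Complex.abs z / c₀))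
    (n k : ℕ) :
    Complex.abs (poch (a - n) k * poch b k / (poch (c - n) k * poch (d - n) k) * z ^ k
        / (Nat.factorial k : ℂ))
      ≤ R ^ k / ∏ i ∈ Finset.range k, max 1 |(n:ℝ) - i| := by
  have habsd := AbsoluteValue.nonneg Complex.abs d
  have hc₀pos : 0 < c₀ := by
    rw [hc₀]; exact div_pos (lt_min hδd one_pos) (by positivity)
  have hc₀half : c₀ ≤ 1/2 := by
    rw [hc₀]
    have h2 : (2:ℝ) ≤ 2 * (Complex.abs d + 1) := by nlinarith
    exact div_le_div₀ (by norm_num) (min_le_right _ _) (by norm_num) h2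
  have hzR : M * B * Complex.abs z ≤ R * c₀ := by
    have h1 : M * B * Complex.abs z / c₀ ≤ R := by rw [hR]; exact le_max_right _ _
    calc M * B * Complex.abs z = M * B * Complex.abs z / c₀ * c₀ := by field_simp
    _ ≤ R * c₀ := mul_le_mul_of_nonneg_right h1 hc₀pos.le
  have hRHS : R ^ k / ∏ i ∈ range k, max 1 |(n:ℝ) - i|
      = ∏ i ∈ range k, (R / max 1 |(n:ℝ) - i|) := by
    rw [Finset.prod_div_distrib, Finset.prod_const, Finset.card_range]
  rw [trm_eq_prod, map_prod, hRHS]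
  apply Finset.prod_le_prod (fun i _ => AbsoluteValue.nonneg _ _)
  intro i _
  -- pointwise bound
  set w : ℝ := max 1 |(n:ℝ) - i| with hwdef
  have hw1 : (1:ℝ) ≤ w := le_max_left _ _
  have hwpos : (0:ℝ) < w := lt_of_lt_of_le one_pos hw1
  have hCd : δc ≤ Complex.abs (c - n + i) := by
    have h := hcb ((n:ℤ) - i)
    have e : c - ((n:ℤ) - (i:ℤ) : ℤ) = c - n + i := by push_cast; ring
    rwa [e] at h
  have hDd : δd ≤ Complex.abs (d - n + i) := by
    have h := hdb ((n:ℤ) - i)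
    have e : d - ((n:ℤ) - (i:ℤ) : ℤ) = d - n + i := by push_cast; ring
    rwa [e] at h
  have hCpos : 0 < Complex.abs (c - n + i) := lt_of_lt_of_le hδc hCd
  have hDpos : 0 < Complex.abs (d - n + i) := lt_of_lt_of_le hδd hDd
  have hA : Complex.abs (a - n + i) ≤ M * Complex.abs (c - n + i) := by
    have h1 : Complex.abs (a - n + i) ≤ Complex.abs (c - n + i) + Complex.abs (a - c) := by
      have e : a - n + i = (c - n + i) + (a - c) := by ring
      rw [e]; exact AbsoluteValue.add_le _ _ _
    have h2 : Complex.abs (a - c) ≤ Complex.abs (a - c) / δc * Complex.abs (c - n + i) := by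
      have h3 := mul_le_mul_of_nonneg_left hCd
        (div_nonneg (AbsoluteValue.nonneg Complex.abs (a - c)) hδc.le)
      calc Complex.abs (a - c) = Complex.abs (a - c) / δc * δc := by field_simp
      _ ≤ _ := h3
    have e : M * Complex.abs (c - n + i)
        = Complex.abs (c - n + i) + Complex.abs (a - c) / δc * Complex.abs (c - n + i) := by
      rw [hM]; ring
    rw [e]; linarith
  have hBb : Complex.abs (b + i) ≤ B * ((i:ℝ) + 1) := by
    have h1 : Complex.abs (b + i) ≤ Complex.abs b + i := by
      calc Complex.abs (b + i) ≤ Complex.abs b + Complex.abs (i:ℂ) := AbsoluteValue.add_le _ _ _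
      _ = Complex.abs b + i := by rw [show Complex.abs (i:ℂ) = i from Complex.norm_natCast i]
    have hb0 := AbsoluteValue.nonneg Complex.abs b
    rw [hB]; nlinarith [Nat.cast_nonneg (α := ℝ) i]
  have hD : c₀ * w ≤ Complex.abs (d - n + i) := by
    rcases le_or_gt w (2 * (Complex.abs d + 1)) with h | h
    · have e : c₀ * (2 * (Complex.abs d + 1)) = min δd 1 := by
        rw [hc₀]; field_simp
      calc c₀ * w ≤ c₀ * (2 * (Complex.abs d + 1)) := mul_le_mul_of_nonneg_left h hc₀pos.le
      _ = min δd 1 := e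
      _ ≤ δd := min_le_left _ _
      _ ≤ _ := hDd
    · have hw : w = |(n:ℝ) - i| := by
        rcases max_choice 1 |(n:ℝ) - i| with h1 | h1
        · exfalso; rw [hwdef] at h; rw [h1] at h; nlinarith
        · rw [hwdef, h1]
      have hxd : |(n:ℝ) - i| - Complex.abs d ≤ Complex.abs (d - n + i) := by
        have h1 : Complex.abs ((n:ℂ) - i) ≤ Complex.abs d + Complex.abs (d - n + i) := by
          have e : (n:ℂ) - i = d - (d - n + i) := by ring
          rw [e]
          exact norm_sub_le (E := ℂ) _ _
        have h2 : Complex.abs ((n:ℂ) - (i:ℂ)) = |(n:ℝ) - i| := by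
          rw [show (n:ℂ) - (i:ℂ) = (((n:ℝ) - i : ℝ) : ℂ) by push_cast; ring,
            show Complex.abs (((n:ℝ) - i : ℝ) : ℂ) = |(n:ℝ) - i| from (Complex.norm_real _).trans (Real.norm_eq_abs _)]
        linarith [h2 ▸ h1]
      have h3 : c₀ * w ≤ w / 2 := by nlinarith
      have h4 : w / 2 ≤ w - Complex.abs d := by rw [hw] at h ⊢; linarith
      rw [hw] at h3 h4 ⊢
      linarith
  -- now the division bound
  rw [map_div₀, map_mul, map_mul, map_mul, map_mul]
  have hi1 : Complex.abs ((i:ℂ) + 1) = (i:ℝ) + 1 := by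
    rw [show ((i:ℂ) + 1) = ((i + 1 : ℕ) : ℂ) by push_cast; ring, show Complex.abs ((i + 1 : ℕ) : ℂ) = ((i + 1 : ℕ) : ℝ) from Complex.norm_natCast _]
    push_cast; ring
  rw [hi1]
  have hipos : (0:ℝ) < (i:ℝ) + 1 := by positivity
  rw [div_le_div_iff₀ (by positivity) hwpos]
  have hz0 := AbsoluteValue.nonneg Complex.abs z
  calc Complex.abs (a - n + i) * Complex.abs (b + i) * Complex.abs z * w
      ≤ (M * Complex.abs (c - n + i)) * (B * ((i:ℝ) + 1)) * Complex.abs z * w := by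
        apply mul_le_mul_of_nonneg_right _ hwpos.le
        apply mul_le_mul_of_nonneg_right _ hz0
        have hM0 : (0:ℝ) ≤ M := by
          rw [hM]
          exact add_nonneg zero_le_one (div_nonneg (AbsoluteValue.nonneg _ _) hδc.le)
        exact mul_le_mul hA hBb (AbsoluteValue.nonneg _ _) (mul_nonneg hM0 hCpos.le)
  _ = (M * B * Complex.abs z) * w * (Complex.abs (c - n + i) * ((i:ℝ) + 1)) := by ring
  _ ≤ (R * c₀) * w * (Complex.abs (c - n + i) * ((i:ℝ) + 1)) := by
        apply mul_le_mul_of_nonneg_right (mul_le_mul_of_nonneg_right hzR hwpos.le)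
          (by positivity)
  _ = R * (c₀ * w) * (Complex.abs (c - n + i) * ((i:ℝ) + 1)) := by ring
  _ ≤ R * Complex.abs (d - n + i) * (Complex.abs (c - n + i) * ((i:ℝ) + 1)) := by
        have hR0 : (0:ℝ) ≤ R := by rw [hR]; exact le_trans zero_le_one (le_max_left _ _)
        apply mul_le_mul_of_nonneg_right (mul_le_mul_of_nonneg_left hD hR0) (by positivity)
  _ = R * (Complex.abs (c - n + i) * Complex.abs (d - n + i) * ((i:ℝ) + 1)) := by ring

lemma W_lower (N j n : ℕ) (hn : 2 * N ≤ n)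
    (Qfact : j ! ≤ (j+1) * 2^j * ∏ i ∈ Finset.range j, max 1 (Nat.dist (n - N) i)) :
    ((n:ℝ)/2)^N * ((j ! : ℝ) / (((j:ℝ)+1) * 2^j))
      ≤ ∏ i ∈ Finset.range (N+j), max 1 |(n:ℝ) - i| := by
  rw [Finset.prod_range_add]
  have h1 : ((n:ℝ)/2)^N ≤ ∏ i ∈ range N, max 1 |(n:ℝ) - i| := by
    calc ((n:ℝ)/2)^N = ∏ _i ∈ range N, ((n:ℝ)/2) := by
          rw [Finset.prod_const, Finset.card_range]
    _ ≤ ∏ i ∈ range N, max 1 |(n:ℝ) - i| := by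
        apply Finset.prod_le_prod (fun _ _ => by positivity)
        intro i hi
        have hi' : i < N := Finset.mem_range.1 hi
        have hiN : (i:ℝ) + 1 ≤ N := by exact_mod_cast hi'
        have hnN : 2*(N:ℝ) ≤ n := by exact_mod_cast hn
        have h : (n:ℝ)/2 ≤ (n:ℝ) - i := by linarith
        exact le_trans h (le_trans (le_abs_self _) (le_max_right _ _))
  have h2 : (j ! : ℝ) / (((j:ℝ)+1) * 2^j) ≤ ∏ i ∈ range j, max 1 |(n:ℝ) - (N + i)| := by
    have hNn : N ≤ n := by omega
    have hcast : ∀ i ∈ range j, ((max 1 (Nat.dist (n - N) i) : ℕ) : ℝ)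
        = max 1 |(n:ℝ) - (N + i)| := by
      intro i _
      have e : (n:ℝ) - ((N:ℝ) + i) = ((n - N : ℕ):ℝ) - i := by
        push_cast [hNn]; ring
      rw [Nat.cast_max, natdist_cast, ← e, Nat.cast_one]
    have hprod : ((∏ i ∈ range j, max 1 (Nat.dist (n - N) i) : ℕ) : ℝ)
        = ∏ i ∈ range j, max 1 |(n:ℝ) - ((N:ℝ) + i)| := by
      rw [Nat.cast_prod]
      exact Finset.prod_congr rfl hcast
    rw [div_le_iff₀ (by positivity)]
    have hq : (j ! : ℝ) ≤ ((j:ℝ)+1) * 2^j * ((∏ i ∈ range j, max 1 (Nat.dist (n - N) i) : ℕ) : ℝ) := by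
      exact_mod_cast Qfact
    rw [hprod] at hq
    calc (j ! : ℝ) ≤ ((j:ℝ)+1) * 2^j * ∏ i ∈ range j, max 1 |(n:ℝ) - ((N:ℝ) + i)| := hq
    _ = (∏ i ∈ range j, max 1 |(n:ℝ) - ((N:ℝ) + i)|) * (((j:ℝ)+1) * 2^j) := by ring
  have h1' : 0 ≤ (j ! : ℝ) / (((j:ℝ)+1) * 2^j) := by positivity
  have h2' : (0:ℝ) ≤ ((n:ℝ)/2)^N := by positivity
  calc ((n:ℝ)/2)^N * ((j ! : ℝ) / (((j:ℝ)+1) * 2^j))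
      ≤ (∏ i ∈ range N, max 1 |(n:ℝ) - i|) * (∏ i ∈ range j, max 1 |(n:ℝ) - ((N:ℝ) + i)|) := by
        apply mul_le_mul h1 h2 h1' (le_trans h2' h1)
  _ = (∏ i ∈ range N, max 1 |(n:ℝ) - i|) * (∏ i ∈ range j, max 1 |(n:ℝ) - ((N + i : ℕ):ℝ)|) := by
        congr 1
        apply Finset.prod_congr rfl
        intro i _
        push_cast
        ring_nf

noncomputable def trm (a b c d z : ℂ) (n k : ℕ) : ℂ :=
  poch (a - n) k * poch b k / (poch (c - n) k * poch (d - n) k) * z ^ k / (Nat.factorial k : ℂ)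

lemma trm_bound' (a b c d z : ℂ) (δc δd M B c₀ R : ℝ)
    (hδc : 0 < δc) (hδd : 0 < δd)
    (hcb : ∀ m : ℤ, δc ≤ Complex.abs (c - m)) (hdb : ∀ m : ℤ, δd ≤ Complex.abs (d - m))
    (hM : M = 1 + Complex.abs (a - c) / δc)
    (hB : B = Complex.abs b + 1)
    (hc₀ : c₀ = min δd 1 / (2 * (Complex.abs d + 1)))
    (hR : R = max 1 (M * B * Complex.abs z / c₀))
    (n k : ℕ) :
    Complex.abs (trm a b c d z n k) ≤ R ^ k / ∏ i ∈ Finset.range k, max 1 |(n:ℝ) - i| := by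
  simp only [trm]
  exact trm_bound a b c d z δc δd M B c₀ R hδc hδd hcb hdb hM hB hc₀ hR n k

/-- Theorem 4.5(1) of the paper: asymptotic expansion of `₂F₂[a−n, b; c−n, d−n; z]`
as `n → +∞` through integer values. -/
theorem F22_shifted_denominators (a b c d : ℂ)
    (hc : ∀ m : ℤ, c ≠ (m : ℂ)) (hd : ∀ m : ℤ, d ≠ (m : ℂ))
    (z : ℂ) (N : ℕ) (hN : 0 < N) :
    ∃ C > (0 : ℝ), ∃ n₀ : ℕ, ∀ n : ℕ, n₀ ≤ n →
      ‖F22 (a - n) b (c - n) (d - n) z -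
          ∑ k ∈ Finset.range N, poch (a - n) k * poch b k /
            (poch (c - n) k * poch (d - n) k) * z ^ k / Nat.factorial k‖
        ≤ C * ((n : ℝ) ^ N)⁻¹ := by
  obtain ⟨δc, hδc, hcb⟩ := delta_int c hc
  obtain ⟨δd, hδd, hdb⟩ := delta_int d hd
  set M : ℝ := 1 + Complex.abs (a - c) / δc with hM
  set B : ℝ := Complex.abs b + 1 with hB
  set c₀ : ℝ := min δd 1 / (2 * (Complex.abs d + 1)) with hc₀
  set R : ℝ := max 1 (M * B * Complex.abs z / c₀) with hR
  have hR1 : (1:ℝ) ≤ R := le_max_left _ _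
  have hR0 : (0:ℝ) < R := lt_of_lt_of_le one_pos hR1
  have hSsum : Summable (fun j : ℕ => (4*R)^j / (j ! : ℝ)) :=
    Real.summable_pow_div_factorial _
  set S : ℝ := ∑' j : ℕ, (4*R)^j / (j ! : ℝ) with hSdef
  have hS0 : (0:ℝ) ≤ S := tsum_nonneg (fun j => by positivity)
  have hCpos : (0:ℝ) < (2*R)^N * S + 1 := by positivity
  refine ⟨(2*R)^N * S + 1, hCpos, 2*N, ?_⟩
  intro n hn
  have hn0 : 0 < n := by omega
  have hnR : (0:ℝ) < n := by exact_mod_cast hn0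
  have hT : ∀ j : ℕ, Complex.abs (trm a b c d z n (N + j))
      ≤ (2*R)^N * ((n:ℝ)^N)⁻¹ * ((4*R)^j / (j ! : ℝ)) := by
    intro j
    have hterm := trm_bound' a b c d z δc δd M B c₀ R hδc hδd hcb hdb hM hB hc₀ hR n (N + j)
    have hW := W_lower N j n hn (Qfact (n - N) j)
    have hWpos : (0:ℝ) < ∏ i ∈ Finset.range (N+j), max 1 |(n:ℝ) - i| := by
      apply Finset.prod_pos
      intro i _
      exact lt_of_lt_of_le one_pos (le_max_left _ _)
    have hmain : R^(N+j) / ∏ i ∈ Finset.range (N+j), max 1 |(n:ℝ) - i|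
        ≤ (2*R)^N * ((n:ℝ)^N)⁻¹ * ((4*R)^j / (j ! : ℝ)) := by
      rw [div_le_iff₀ hWpos]
      have h2j : ((j:ℝ)+1) ≤ 2^j := by
        have := Nat.lt_two_pow_self (n := j)
        exact_mod_cast this
      have hfact : (0:ℝ) < (j ! : ℝ) := by exact_mod_cast Nat.factorial_pos j
      calc R^(N+j) ≤ R^(N+j) * (2^j/((j:ℝ)+1)) := by
            apply le_mul_of_one_le_right (by positivity)
            rw [le_div_iff₀ (by positivity)]
            linarith
      _ = ((2*R)^N * ((n:ℝ)^N)⁻¹ * ((4*R)^j / (j ! : ℝ)))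
            * (((n:ℝ)/2)^N * ((j ! : ℝ) / (((j:ℝ)+1) * 2^j))) := by
            have h1 : ((j:ℝ)+1) ≠ 0 := by positivity
            have h2 : (j ! : ℝ) ≠ 0 := ne_of_gt hfact
            have h3 : (n:ℝ) ≠ 0 := ne_of_gt hnR
            have h4 : (4:ℝ)^j = 2^(2*j) := by rw [pow_mul]; norm_num
            field_simp
            simp only [mul_pow, pow_add, h4]
            have h5 : ((1:ℝ)/2)^N * 2^N = 1 := by rw [← mul_pow]; norm_num
            linear_combination (-(R^N*R^j*(n:ℝ)^N*2^(j*2))) * h5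
      _ ≤ _ := mul_le_mul_of_nonneg_left hW (by positivity)
    exact le_trans hterm hmain
  have hTsum : Summable (fun j : ℕ => (2*R)^N * ((n:ℝ)^N)⁻¹ * ((4*R)^j / (j ! : ℝ))) :=
    hSsum.mul_left _
  have hnorm : Summable (fun j : ℕ => ‖trm a b c d z n (j + N)‖) := by
    apply Summable.of_nonneg_of_le (fun j => norm_nonneg _) _ hTsum
    intro j
    rw [Nat.add_comm j N]
    exact hT j
  have htail_sum : Summable (fun j : ℕ => trm a b c d z n (j + N)) :=
    Summable.of_norm hnorm
  have hgsum : Summable (fun k : ℕ => trm a b c d z n k) :=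
    (summable_nat_add_iff N).1 htail_sum
  have hsplit := Summable.sum_add_tsum_nat_add (f := fun k => trm a b c d z n k) N hgsum
  have hgoal : F22 (a - n) b (c - n) (d - n) z
      - (∑ k ∈ Finset.range N, poch (a - n) k * poch b k /
          (poch (c - n) k * poch (d - n) k) * z ^ k / (Nat.factorial k : ℂ))
      = ∑' j : ℕ, trm a b c d z n (j + N) := by
    have hF : F22 (a - n) b (c - n) (d - n) z = ∑' k, trm a b c d z n k := rfl
    have e : (∑ k ∈ Finset.range N, poch (a - n) k * poch b k /
        (poch (c - n) k * poch (d - n) k) * z ^ k / (Nat.factorial k : ℂ))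
        = ∑ k ∈ Finset.range N, trm a b c d z n k := rfl
    rw [hF, e, ← hsplit]
    ring
  rw [hgoal]
  calc Complex.abs (∑' j : ℕ, trm a b c d z n (j + N))
      = ‖∑' j : ℕ, trm a b c d z n (j + N)‖ := rfl
  _ ≤ ∑' j : ℕ, ‖trm a b c d z n (j + N)‖ := norm_tsum_le_tsum_norm hnorm
  _ ≤ ∑' j : ℕ, ((2*R)^N * ((n:ℝ)^N)⁻¹ * ((4*R)^j / (j ! : ℝ))) := by
      apply Summable.tsum_le_tsum _ hnorm hTsum
      intro j
      rw [Nat.add_comm j N]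
      exact hT j
  _ = (2*R)^N * ((n:ℝ)^N)⁻¹ * S := by
      rw [tsum_mul_left]
  _ ≤ ((2*R)^N * S + 1) * ((n:ℝ)^N)⁻¹ := by
      have h1 : (0:ℝ) ≤ ((n:ℝ)^N)⁻¹ := by positivity
      have h2 : (2*R)^N * ((n:ℝ)^N)⁻¹ * S = ((2*R)^N * S) * ((n:ℝ)^N)⁻¹ := by ring
      rw [h2]
      apply mul_le_mul_of_nonneg_right _ h1
      linarith
end
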